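/- arXiv:2505.09736 — 5 statements merged into one kernel-verified Lean document; each statement's English description precedes it below -/
import Mathlib

section
/- A nontrivial complete cone is not taut: if U is a nonzero integral n-cycle and x ∉ Vert(U), then cone(x,U) is not a taut filling of U, i.e., Zvol(U) < |cone(x,U)|. -/
/-- Oriented `n`-simplices on vertex set `ℕ`, represented by their vertex sets
(of size `n+1`), with the orientation given by increasing order. -/
abbrev Simp (n : ℕ) : Type := {s : Finset ℕ // s.card = n + 1}

/-- Simplicial `n`-chains with coefficients in `R`. -/
abbrev GChain (R : Type) [CommRing R] (n : ℕ) : Type := Simp n →₀ R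

/-- Integral simplicial `n`-chains. -/
abbrev ZChain (n : ℕ) : Type := GChain ℤ n

/-- Boundary of a single oriented `(n+1)`-simplex. -/
noncomputable def simpBdry (R : Type) [CommRing R] {n : ℕ} (s : Simp (n + 1)) :
    GChain R n :=
  ∑ v ∈ (s : Finset ℕ).attach,
    ((-1 : R) ^ (((s : Finset ℕ).filter (· < (v : ℕ))).card)) •
      Finsupp.single
        ⟨(s : Finset ℕ).erase (v : ℕ), by
          have hv := v.2
          simp [Finset.card_erase_of_mem hv, s.2]⟩ 1

/-- The simplicial boundary operator. -/
noncomputable def bdry {R : Type} [CommRing R] {n : ℕ} (M : GChain R (n + 1)) :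
    GChain R n :=
  M.sum fun s c => c • simpBdry R s

/-- The `L¹`-norm of an integral chain. -/
noncomputable def znorm {n : ℕ} (M : ZChain n) : ℕ :=
  M.sum fun _ c => c.natAbs

/-- The set of vertices of simplices with nonzero coefficient. -/
noncomputable def vert {R : Type} [CommRing R] {n : ℕ} (M : GChain R n) : Finset ℕ :=
  M.support.sup fun s => (s : Finset ℕ)

/-- The chain is supported on simplices with vertices in `A`. -/
def suppOn {R : Type} [CommRing R] {n : ℕ} (A : Finset ℕ) (M : GChain R n) : Prop :=
  ∀ s ∈ M.support, (s : Finset ℕ) ⊆ A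

/-- Total multiplicity in `M` of simplices containing the vertex `x`. -/
noncomputable def zdeg {n : ℕ} (x : ℕ) (M : ZChain n) : ℕ :=
  M.sum fun s c => if x ∈ (s : Finset ℕ) then c.natAbs else 0

/-- Maximum vertex degree of an integral chain. -/
noncomputable def zmaxdeg {n : ℕ} (M : ZChain n) : ℕ :=
  (vert M).sup fun x => zdeg x M

/-- The cone from the vertex `x` over the chain `U`: each oriented simplex of `U`
gets `x` adjoined as a new first vertex; simplices already containing `x`
contribute `0`. -/
noncomputable def cone {n : ℕ} (x : ℕ) (U : ZChain n) : ZChain (n + 1) :=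
  U.sum fun s c =>
    if h : x ∈ (s : Finset ℕ) then 0
    else
      (((-1 : ℤ) ^ (((s : Finset ℕ).filter (· < x)).card)) * c) •
        Finsupp.single ⟨insert x (s : Finset ℕ), by
          simp [Finset.card_insert_of_notMem h, s.2]⟩ 1

/-- `Zvol X`: the minimal `L¹`-norm of an integral filling of `X`. -/
noncomputable def zvol {n : ℕ} (X : ZChain n) : ℕ :=
  sInf {m : ℕ | ∃ M : ZChain (n + 1), bdry M = X ∧ znorm M = m}

/-- A chain is taut if it is an optimal filling of its boundary. -/
def Taut {n : ℕ} (M : ZChain (n + 1)) : Prop :=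
  znorm M = zvol (bdry M)

section Lemmas
variable {n : ℕ}

lemma cone_zero (x : ℕ) : cone x (0 : ZChain n) = 0 := by
  simp [cone]

lemma cone_add (x : ℕ) (A B : ZChain n) : cone x (A + B) = cone x A + cone x B := by
  unfold cone
  apply Finsupp.sum_add_index'
  · intro s; split <;> simp
  · intro s c1 c2; split
    · simp
    · rw [← add_smul]; ring_nf

lemma bdry_add (A B : GChain ℤ (n+1)) : bdry (A + B) = bdry A + bdry B := by
  unfold bdry
  apply Finsupp.sum_add_index'
  · intro s; simp
  · intro s c1 c2; rw [add_smul]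

lemma bdry_single (s : Simp (n+1)) (c : ℤ) :
    bdry (Finsupp.single s c) = c • simpBdry ℤ s := by
  unfold bdry
  rw [Finsupp.sum_single_index]
  simp

lemma cone_single (x : ℕ) (s : Simp n) (c : ℤ) :
    cone x (Finsupp.single s c) =
      if h : x ∈ (s : Finset ℕ) then 0
      else Finsupp.single ⟨insert x (s : Finset ℕ), by
          simp [Finset.card_insert_of_notMem h, s.2]⟩
        (((-1 : ℤ) ^ (((s : Finset ℕ).filter (· < x)).card)) * c) := by
  unfold cone
  rw [Finsupp.sum_single_index]
  · split
    · rfl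
    · rw [Finsupp.smul_single, smul_eq_mul, mul_one]
  · split <;> simp

end Lemmas
section Lemmas2
variable {n : ℕ}

lemma bdry_zero : bdry (0 : GChain ℤ (n+1)) = 0 := by simp [bdry]

lemma cone_sum {α : Type*} (x : ℕ) (t : Finset α) (f : α → ZChain n) :
    cone x (∑ i ∈ t, f i) = ∑ i ∈ t, cone x (f i) :=
  map_sum (AddMonoidHom.mk' (cone x) (cone_add x)) f t

lemma bdry_sum {α : Type*} (t : Finset α) (f : α → GChain ℤ (n+1)) :
    bdry (∑ i ∈ t, f i) = ∑ i ∈ t, bdry (f i) :=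
  map_sum (AddMonoidHom.mk' bdry bdry_add) f t

lemma smul_simpBdry (c : ℤ) (s : Simp (n+1)) :
    c • simpBdry ℤ s = ∑ v ∈ (s : Finset ℕ).attach,
      Finsupp.single
        ⟨(s : Finset ℕ).erase (v : ℕ), by
          have hv := v.2
          simp [Finset.card_erase_of_mem hv, s.2]⟩
        (c * (-1 : ℤ) ^ (((s : Finset ℕ).filter (· < (v : ℕ))).card)) := by
  unfold simpBdry
  rw [Finset.smul_sum]
  refine Finset.sum_congr rfl fun v _ => ?_
  rw [smul_smul, Finsupp.smul_single, smul_eq_mul, mul_one, mul_comm]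

lemma key_mem (y : ℕ) (s : Simp (n+1)) (c : ℤ) (hy : y ∈ (s : Finset ℕ)) :
    cone y (bdry (Finsupp.single s c)) = Finsupp.single s c := by
  rw [bdry_single, smul_simpBdry, cone_sum]
  rw [Finset.sum_eq_single_of_mem ⟨y, hy⟩ (Finset.mem_attach _ _)]
  · rw [cone_single]
    have hne : y ∉ (s : Finset ℕ).erase y := Finset.notMem_erase _ _
    rw [dif_neg hne]
    have h1 : insert y ((s : Finset ℕ).erase y) = (s : Finset ℕ) :=
      Finset.insert_erase hy
    have h2 : ((s : Finset ℕ).erase y).filter (· < y) = (s : Finset ℕ).filter (· < y) := by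
      rw [Finset.filter_erase, Finset.erase_eq_of_notMem]
      simp
    have h3 : (⟨insert y ((s : Finset ℕ).erase y), by
        simp [Finset.card_insert_of_notMem hne,
          Finset.card_erase_of_mem hy, s.2]⟩ : Simp (n+1)) = s := Subtype.ext h1
    rw [h2]
    rw [show ((-1:ℤ) ^ (((s : Finset ℕ).filter (· < y)).card) *
        (c * (-1:ℤ) ^ (((s : Finset ℕ).filter (· < y)).card))) = c by
      rw [mul_comm c, ← mul_assoc, ← pow_add]
      rw [Even.neg_one_pow ⟨_, rfl⟩, one_mul]]
    exact congrArg (fun t => Finsupp.single t c) h3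
  · intro v _ hv
    rw [cone_single, dif_pos]
    rw [Finset.mem_erase]
    exact ⟨fun h => hv (Subtype.ext h.symm), hy⟩

end Lemmas2
section Lemmas3
variable {n : ℕ}

/-- Totalized single chain: `single ⟨t, _⟩ c` if `t` has the right size, else 0. -/
noncomputable def sing (m : ℕ) (t : Finset ℕ) (c : ℤ) : ZChain m :=
  if h : t.card = m + 1 then Finsupp.single ⟨t, h⟩ c else 0

lemma sing_eq {m : ℕ} (t : Finset ℕ) (h : t.card = m + 1) (c : ℤ) :
    sing m t c = Finsupp.single ⟨t, h⟩ c := by rw [sing, dif_pos h]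

lemma smul_simpBdry' (c : ℤ) (s : Simp (n+1)) :
    c • simpBdry ℤ s = ∑ v ∈ (s : Finset ℕ),
      sing n ((s : Finset ℕ).erase v)
        (c * (-1 : ℤ) ^ (((s : Finset ℕ).filter (· < v)).card)) := by
  rw [smul_simpBdry, ← Finset.sum_attach (s : Finset ℕ) (fun v =>
    sing n ((s : Finset ℕ).erase v)
      (c * (-1 : ℤ) ^ (((s : Finset ℕ).filter (· < v)).card)))]
  refine Finset.sum_congr rfl fun v _ => ?_
  rw [sing_eq]

lemma bdry_sing (t : Finset ℕ) (h : t.card = n + 2) (c : ℤ) :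
    bdry (sing (n+1) t c) = ∑ v ∈ t,
      sing n (t.erase v) (c * (-1 : ℤ) ^ ((t.filter (· < v)).card)) := by
  rw [sing_eq t h, bdry_single, smul_simpBdry' c ⟨t, h⟩]

lemma cone_sing (x : ℕ) (t : Finset ℕ) (h : t.card = n + 1) (c : ℤ) :
    cone x (sing n t c) = if x ∈ t then 0
      else sing (n+1) (insert x t) ((-1 : ℤ) ^ ((t.filter (· < x)).card) * c) := by
  rw [sing_eq t h, cone_single]
  split
  · rfl
  · next hx => rw [sing_eq _ (by simp [Finset.card_insert_of_notMem hx, h])]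

end Lemmas3
section Lemmas4
variable {n : ℕ}

lemma sing_add (m : ℕ) (t : Finset ℕ) (x x' : ℤ) :
    sing m t x + sing m t x' = sing m t (x + x') := by
  unfold sing; split <;> simp [Finsupp.single_add]

lemma sing_zero (m : ℕ) (t : Finset ℕ) : sing m t 0 = 0 := by
  unfold sing; split <;> simp

lemma key (y : ℕ) (s : Simp (n+1)) (c : ℤ) :
    bdry (cone y (Finsupp.single s c)) + cone y (bdry (Finsupp.single s c)) =
      Finsupp.single s c := by
  by_cases hy : y ∈ (s : Finset ℕ)
  · rw [cone_single, dif_pos hy, bdry_zero, zero_add, key_mem y s c hy]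
  · rw [← sing_eq (s : Finset ℕ) s.2 c, cone_sing y _ s.2, if_neg hy,
      bdry_sing _ (by simp [Finset.card_insert_of_notMem hy, s.2]),
      Finset.sum_insert hy]
    set a := ((s : Finset ℕ).filter (· < y)).card with ha
    have hterm : (insert y (s : Finset ℕ)).erase y = (s : Finset ℕ) :=
      Finset.erase_insert hy
    have hfy : (insert y (s : Finset ℕ)).filter (· < y) = (s : Finset ℕ).filter (· < y) := by
      rw [Finset.filter_insert, if_neg (lt_irrefl y)]
    rw [hterm, hfy, ← ha,
      show ((-1:ℤ) ^ a * c * (-1:ℤ) ^ a) = c by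
        rw [mul_comm _ c, mul_assoc, ← pow_add, Even.neg_one_pow ⟨_, rfl⟩, mul_one]]
    -- now the remaining two sums cancel
    rw [bdry_sing _ s.2, cone_sum, add_assoc]
    rw [add_eq_left, ← Finset.sum_add_distrib]
    refine Finset.sum_eq_zero fun v hv => ?_
    have hvy : v ≠ y := fun h => hy (h ▸ hv)
    have hcard : ((s : Finset ℕ).erase v).card = n + 1 := by
      simp [Finset.card_erase_of_mem hv, s.2]
    rw [cone_sing y _ hcard, if_neg (fun h => hy (Finset.mem_of_mem_erase h))]
    have hset : (insert y (s : Finset ℕ)).erase v = insert y ((s : Finset ℕ).erase v) :=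
      Finset.erase_insert_of_ne hvy.symm
    rw [hset, sing_add]
    set k := ((s : Finset ℕ).filter (· < v)).card with hk
    have hfe : ((s : Finset ℕ).erase v).filter (· < y)
        = ((s : Finset ℕ).filter (· < y)).erase v := Finset.filter_erase _ v _
    rcases lt_or_gt_of_ne hvy with hlt | hgt
    · -- v < y
      have hK : (insert y (s : Finset ℕ)).filter (· < v) = (s : Finset ℕ).filter (· < v) := by
        rw [Finset.filter_insert, if_neg (by omega)]
      have hmem : v ∈ (s : Finset ℕ).filter (· < y) := Finset.mem_filter.mpr ⟨hv, hlt⟩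
      have hm : (((s : Finset ℕ).filter (· < y)).erase v).card + 1 = a :=
        Finset.card_erase_add_one hmem
      rw [hK, ← hk, hfe]
      rw [show ((-1:ℤ) ^ a * c * (-1:ℤ) ^ k +
          (-1:ℤ) ^ (((s : Finset ℕ).filter (· < y)).erase v).card * (c * (-1:ℤ) ^ k)) = 0 by
        rw [← hm, pow_succ]; ring]
      exact sing_zero _ _
    · -- y < v
      have hK : ((insert y (s : Finset ℕ)).filter (· < v)).card = k + 1 := by
        rw [Finset.filter_insert, if_pos hgt,
          Finset.card_insert_of_notMem (fun h => hy (Finset.mem_filter.mp h).1)]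
      have hm : (((s : Finset ℕ).filter (· < y)).erase v).card = a := by
        rw [Finset.erase_eq_of_notMem (fun h => absurd (Finset.mem_filter.mp h).2 (by omega))]
      rw [hK, hfe, hm]
      rw [show ((-1:ℤ) ^ a * c * (-1:ℤ) ^ (k + 1) + (-1:ℤ) ^ a * (c * (-1:ℤ) ^ k)) = 0 by
        rw [pow_succ]; ring]
      exact sing_zero _ _

end Lemmas4
section Lemmas5
variable {n : ℕ}

lemma bdry_cone (y : ℕ) (M : ZChain (n+1)) :
    bdry (cone y M) + cone y (bdry M) = M := by
  induction M using Finsupp.induction_linear with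
  | zero => rw [cone_zero]; simp [bdry, cone_zero]
  | add f g hf hg =>
      rw [cone_add, bdry_add, bdry_add, cone_add, add_add_add_comm, hf, hg]
  | single s c => exact key y s c

lemma sum_add_of_disjoint {m : ℕ} {M : Type*} [AddCommMonoid M]
    (A B : Simp m →₀ ℤ) (hd : Disjoint A.support B.support)
    (h : Simp m → ℤ → M) (h0 : ∀ s, h s 0 = 0) :
    (A + B).sum h = A.sum h + B.sum h := by
  rw [Finsupp.sum, Finsupp.sum, Finsupp.sum, Finsupp.support_add_eq hd,
    Finset.sum_union hd]
  congr 1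
  · refine Finset.sum_congr rfl fun s hs => ?_
    rw [Finsupp.add_apply, Finsupp.notMem_support_iff.mp
      (Finset.disjoint_left.mp hd hs), add_zero]
  · refine Finset.sum_congr rfl fun s hs => ?_
    rw [Finsupp.add_apply, Finsupp.notMem_support_iff.mp
      (Finset.disjoint_right.mp hd hs), zero_add]

lemma znorm_add_of_disjoint {m : ℕ} (A B : ZChain m)
    (hd : Disjoint A.support B.support) : znorm (A + B) = znorm A + znorm B :=
  sum_add_of_disjoint A B hd _ (fun _ => rfl)

lemma zdeg_add_of_disjoint {m : ℕ} (y : ℕ) (A B : ZChain m)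
    (hd : Disjoint A.support B.support) :
    zdeg y (A + B) = zdeg y A + zdeg y B :=
  sum_add_of_disjoint A B hd _ (fun _ => by simp [ite_self])

lemma znorm_single {m : ℕ} (s : Simp m) (c : ℤ) :
    znorm (Finsupp.single s c) = c.natAbs := by
  unfold znorm
  by_cases hc : c = 0
  · simp [hc]
  · rw [Finsupp.sum_single_index rfl]

lemma zdeg_single {m : ℕ} (y : ℕ) (s : Simp m) (c : ℤ) :
    zdeg y (Finsupp.single s c) = if y ∈ (s : Finset ℕ) then c.natAbs else 0 := by
  unfold zdeg
  by_cases hc : c = 0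
  · simp [hc, ite_self]
  · rw [Finsupp.sum_single_index (by simp [ite_self])]

lemma znorm_zero {m : ℕ} : znorm (0 : ZChain m) = 0 := by simp [znorm]

lemma znorm_add_le {m : ℕ} (A B : ZChain m) :
    znorm (A + B) ≤ znorm A + znorm B := by
  unfold znorm Finsupp.sum
  calc ∑ s ∈ (A + B).support, ((A + B) s).natAbs
      ≤ ∑ s ∈ A.support ∪ B.support, ((A + B) s).natAbs :=
        Finset.sum_le_sum_of_subset Finsupp.support_add
    _ ≤ ∑ s ∈ A.support ∪ B.support, ((A s).natAbs + (B s).natAbs) := by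
        refine Finset.sum_le_sum fun s _ => ?_
        rw [Finsupp.add_apply]; exact Int.natAbs_add_le _ _
    _ = ∑ s ∈ A.support ∪ B.support, (A s).natAbs
        + ∑ s ∈ A.support ∪ B.support, (B s).natAbs := Finset.sum_add_distrib
    _ = ∑ s ∈ A.support, (A s).natAbs + ∑ s ∈ B.support, (B s).natAbs := by
        congr 1
        · exact (Finset.sum_subset Finset.subset_union_left (fun s _ hs => by
            rw [Finsupp.notMem_support_iff.mp hs]; rfl)).symm
        · exact (Finset.sum_subset Finset.subset_union_right (fun s _ hs => by
            rw [Finsupp.notMem_support_iff.mp hs]; rfl)).symm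

lemma mem_vert {m : ℕ} {y : ℕ} {M : ZChain m} :
    y ∈ vert M ↔ ∃ s ∈ M.support, y ∈ (s : Finset ℕ) := by
  unfold vert; rw [Finset.mem_sup]

lemma cone_support {m : ℕ} (x : ℕ) (M : ZChain m) :
    ∀ t ∈ (cone x M).support, ∃ s ∈ M.support,
      x ∉ (s : Finset ℕ) ∧ (t : Finset ℕ) = insert x (s : Finset ℕ) := by
  intro t ht
  have := Finsupp.support_sum ht
  rw [Finset.mem_biUnion] at this
  obtain ⟨s, hs, hts⟩ := this
  refine ⟨s, hs, ?_⟩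
  by_cases hx : x ∈ (s : Finset ℕ)
  · rw [dif_pos hx] at hts; simp at hts
  · rw [dif_neg hx] at hts
    refine ⟨hx, ?_⟩
    have := Finsupp.support_single_subset (Finsupp.support_smul hts)
    simp only [Finset.mem_singleton] at this
    rw [this]

end Lemmas5
section Lemmas6
variable {n : ℕ}

lemma single_support_disjoint {m : ℕ} (a : Simp m) (b : ℤ) (f : Simp m →₀ ℤ)
    (ha : a ∉ f.support) :
    Disjoint (Finsupp.single a b).support f.support := by
  refine Finset.disjoint_left.mpr fun s hs => ?_
  have := Finsupp.support_single_subset hs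
  simp only [Finset.mem_singleton] at this
  rwa [this]

lemma znorm_cone_single (y : ℕ) (a : Simp (n+1)) (b : ℤ) :
    znorm (cone y (Finsupp.single a b)) + zdeg y (Finsupp.single a b) = b.natAbs := by
  rw [cone_single, zdeg_single]
  by_cases hy : y ∈ (a : Finset ℕ)
  · rw [dif_pos hy, if_pos hy, znorm_zero, zero_add]
  · rw [dif_neg hy, if_neg hy, znorm_single, add_zero, Int.natAbs_mul,
      Int.natAbs_pow]
    simp

lemma znorm_cone_add_zdeg_le (y : ℕ) (M : ZChain (n+1)) :
    znorm (cone y M) + zdeg y M ≤ znorm M := by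
  induction M using Finsupp.induction with
  | zero => simp [cone_zero, znorm_zero, zdeg]
  | single_add a b f haf hb ih =>
      have hd := single_support_disjoint a b f haf
      calc znorm (cone y (Finsupp.single a b + f)) + zdeg y (Finsupp.single a b + f)
          = znorm (cone y (Finsupp.single a b) + cone y f)
            + (zdeg y (Finsupp.single a b) + zdeg y f) := by
            rw [cone_add, zdeg_add_of_disjoint y _ _ hd]
        _ ≤ (znorm (cone y (Finsupp.single a b)) + znorm (cone y f))
            + (zdeg y (Finsupp.single a b) + zdeg y f) := by
            exact Nat.add_le_add_right (znorm_add_le _ _) _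
        _ = (znorm (cone y (Finsupp.single a b)) + zdeg y (Finsupp.single a b))
            + (znorm (cone y f) + zdeg y f) := by ring
        _ ≤ b.natAbs + znorm f := by
            rw [znorm_cone_single]
            exact Nat.add_le_add_left ih _
        _ = znorm (Finsupp.single a b + f) := by
            rw [znorm_add_of_disjoint _ _ hd, znorm_single]

lemma znorm_cone_of_not_mem (x : ℕ) (M : ZChain (n+1)) (hx : x ∉ vert M) :
    znorm (cone x M) = znorm M := by
  induction M using Finsupp.induction with
  | zero => simp [cone_zero, znorm_zero]
  | single_add a b f haf hb ih =>
      have hd := single_support_disjoint a b f haf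
      have hsupp : (Finsupp.single a b + f).support
          = (Finsupp.single a b).support ∪ f.support := Finsupp.support_add_eq hd
      have hmem : ∀ s ∈ (Finsupp.single a b + f).support, x ∉ (s : Finset ℕ) := by
        intro s hs hxs
        exact hx (mem_vert.mpr ⟨s, hs, hxs⟩)
      have hxa : x ∉ (a : Finset ℕ) := by
        refine hmem a ?_
        rw [hsupp, Finset.mem_union]
        exact Or.inl (by rw [Finsupp.support_single_ne_zero a hb]; simp)
      have hxf : x ∉ vert f := by
        intro h
        obtain ⟨s, hs, hxs⟩ := mem_vert.mp h
        exact hmem s (by rw [hsupp, Finset.mem_union]; exact Or.inr hs) hxs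
      rw [cone_add, cone_single, dif_neg hxa]
      have hdc : Disjoint (Finsupp.single
          (⟨insert x (a : Finset ℕ), by
            simp [Finset.card_insert_of_notMem hxa, a.2]⟩ : Simp (n+2))
          ((-1 : ℤ) ^ (((a : Finset ℕ).filter (· < x)).card) * b)).support
          (cone x f).support := by
        refine Finset.disjoint_left.mpr fun t ht htc => ?_
        have h1 := Finsupp.support_single_subset ht
        simp only [Finset.mem_singleton] at h1
        obtain ⟨s, hs, hxs, hts⟩ := cone_support x f t htc
        rw [h1] at hts
        have hts' : insert x (a : Finset ℕ) = insert x (s : Finset ℕ) := hts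
        have : (a : Finset ℕ) = (s : Finset ℕ) := by
          rw [← Finset.erase_insert hxa, ← Finset.erase_insert hxs, hts']
        exact haf (by rwa [Subtype.ext this])
      rw [znorm_add_of_disjoint _ _ hdc, znorm_add_of_disjoint _ _ hd,
        znorm_single, znorm_single, Int.natAbs_mul, ih hxf,
        Int.natAbs_pow]
      simp

end Lemmas6
/-- a nontrivial complete cone is not taut. -/
theorem complete_cone_not_taut {n : ℕ} (x : ℕ) (U : ZChain (n + 1))
    (hU : bdry U = 0) (hne : U ≠ 0) (hx : x ∉ vert U) :
    zvol U < znorm (cone x U) := by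
  obtain ⟨s, hs⟩ := Finsupp.support_nonempty_iff.mpr hne
  obtain ⟨y, hy⟩ := Finset.card_pos.mp
    (show 0 < (s : Finset ℕ).card by rw [s.2]; omega)
  have hfill : bdry (cone y U) = U := by
    have h := bdry_cone y U
    rwa [hU, cone_zero, add_zero] at h
  have h1 : zvol U ≤ znorm (cone y U) := Nat.sInf_le ⟨cone y U, hfill, rfl⟩
  have h2 := znorm_cone_add_zdeg_le y U
  have h3 : 0 < zdeg y U := by
    have hpos : 0 < (U s).natAbs := Int.natAbs_pos.mpr (Finsupp.mem_support_iff.mp hs)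
    have hle : (if y ∈ (s : Finset ℕ) then (U s).natAbs else 0) ≤ zdeg y U := by
      unfold zdeg Finsupp.sum
      exact Finset.single_le_sum
        (f := fun (t : Simp (n+1)) => if y ∈ (t : Finset ℕ) then (U t).natAbs else 0)
        (fun _ _ => Nat.zero_le _) hs
    rw [if_pos hy] at hle
    omega
  have h4 := znorm_cone_of_not_mem x U hx
  omega
end

section
/- A taut integral (n+1)-chain M has no internal vertices: Vert(M) = Vert(∂M). Equivalently, if x ∈ Vert(M) but x ∉ Vert(∂M), then M is not taut. -/
namespace TautProof

lemma bdry_add {n : ℕ} (M N : ZChain (n + 1)) : bdry (M + N) = bdry M + bdry N :=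
  Finsupp.sum_add_index' (fun _ => zero_smul ℤ _) (fun s b₁ b₂ => add_smul b₁ b₂ _)

noncomputable def bdryHom (n : ℕ) : ZChain (n + 1) →+ ZChain n :=
  AddMonoidHom.mk' bdry bdry_add

@[simp] lemma bdryHom_apply {n : ℕ} (M : ZChain (n + 1)) : bdryHom n M = bdry M := rfl

lemma cone_add {n : ℕ} (x : ℕ) (M N : ZChain n) :
    cone x (M + N) = cone x M + cone x N := by
  unfold cone
  refine Finsupp.sum_add_index' (fun s => ?_) (fun s b₁ b₂ => ?_)
  · split <;> simp
  · split
    · simp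
    · rw [mul_add, add_smul]

noncomputable def coneHom (n x : ℕ) : ZChain n →+ ZChain (n + 1) :=
  AddMonoidHom.mk' (cone x) (cone_add x)

@[simp] lemma coneHom_apply {n : ℕ} (x : ℕ) (U : ZChain n) : coneHom n x U = cone x U := rfl

lemma cone_zsmul {n : ℕ} (x : ℕ) (c : ℤ) (U : ZChain n) :
    cone x (c • U) = c • cone x U := map_zsmul (coneHom n x) c U

lemma cone_zero {n : ℕ} (x : ℕ) : cone x (0 : ZChain n) = 0 := map_zero (coneHom n x)

lemma bdry_zsmul {n : ℕ} (c : ℤ) (M : ZChain (n + 1)) :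
    bdry (c • M) = c • bdry M := map_zsmul (bdryHom n) c M

lemma znorm_eq_sum {n : ℕ} (M : ZChain n) :
    znorm M = ∑ s ∈ M.support, (M s).natAbs := rfl

lemma znorm_eq_sum_subset {n : ℕ} (M : ZChain n) {t : Finset (Simp n)}
    (h : M.support ⊆ t) : znorm M = ∑ s ∈ t, (M s).natAbs := by
  rw [znorm_eq_sum]
  refine Finset.sum_subset h (fun s _ hs => ?_)
  simp [Finsupp.notMem_support_iff.mp hs]

@[simp] lemma znorm_zero {n : ℕ} : znorm (0 : ZChain n) = 0 := rfl

lemma znorm_add_le {n : ℕ} (M N : ZChain n) :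
    znorm (M + N) ≤ znorm M + znorm N := by
  rw [znorm_eq_sum_subset (M + N) (Finsupp.support_add),
    znorm_eq_sum_subset M Finset.subset_union_left,
    znorm_eq_sum_subset N Finset.subset_union_right, ← Finset.sum_add_distrib]
  refine Finset.sum_le_sum fun i _ => ?_
  simp only [Finsupp.add_apply]
  exact Int.natAbs_add_le _ _

lemma znorm_neg {n : ℕ} (M : ZChain n) : znorm (-M) = znorm M := by
  rw [znorm_eq_sum_subset (-M) (by simp : (-M).support ⊆ M.support), znorm_eq_sum]
  simp

lemma znorm_single {n : ℕ} (s : Simp n) (c : ℤ) :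
    znorm (Finsupp.single s c) = c.natAbs := by
  unfold znorm
  exact Finsupp.sum_single_index rfl

lemma znorm_sum_le {n : ℕ} {ι : Type} (t : Finset ι) (g : ι → ZChain n) :
    znorm (∑ i ∈ t, g i) ≤ ∑ i ∈ t, znorm (g i) := by
  classical
  induction t using Finset.induction_on with
  | empty => simp
  | insert _ _ hi ih =>
      rw [Finset.sum_insert hi, Finset.sum_insert hi]
      exact le_trans (znorm_add_le _ _) (by omega)

lemma mem_vert_iff {n : ℕ} {x : ℕ} {M : ZChain n} :
    x ∈ vert M ↔ ∃ s ∈ M.support, x ∈ (s : Finset ℕ) := by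
  simp [vert, Finset.mem_sup]

lemma apply_eq_zero_of_not_mem_vert {n : ℕ} {x : ℕ} {M : ZChain n}
    (hx : x ∉ vert M) {w : Simp n} (hw : x ∈ (w : Finset ℕ)) : M w = 0 := by
  by_contra h
  exact hx (mem_vert_iff.mpr ⟨w, Finsupp.mem_support_iff.mpr h, hw⟩)

lemma subset_vert_of_mem_support {n : ℕ} {M : ZChain n} {s : Simp n}
    (hs : s ∈ M.support) : (s : Finset ℕ) ⊆ vert M := by
  have h := Finset.le_sup (f := fun s : Simp n => (s : Finset ℕ)) hs
  exact h

lemma support_bdry_subset {n : ℕ} {M : ZChain (n + 1)} {t : Simp n}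
    (ht : t ∈ (bdry M).support) : ∃ s ∈ M.support, (t : Finset ℕ) ⊆ (s : Finset ℕ) := by
  classical
  have h1 := Finsupp.support_sum ht
  obtain ⟨s, hs, ht1⟩ := Finset.mem_biUnion.mp h1
  refine ⟨s, hs, ?_⟩
  have h2 : ((M s • simpBdry ℤ s).support : Finset (Simp n)) ⊆ (simpBdry ℤ s).support :=
    Finsupp.support_smul
  have h3 := h2 ht1
  unfold simpBdry at h3
  have h4 := Finsupp.support_finset_sum h3
  obtain ⟨v, _, h5⟩ := Finset.mem_biUnion.mp h4
  have h6 := Finsupp.support_smul h5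
  have h7 := Finsupp.support_single_subset h6
  have h8 : t = ⟨(s : Finset ℕ).erase (v : ℕ), by
      have hv := v.2; simp [Finset.card_erase_of_mem hv, s.2]⟩ :=
    Finset.mem_singleton.mp h7
  rw [h8]
  exact Finset.erase_subset _ _



/-- face helper on raw finsets -/
noncomputable def face (n : ℕ) (s : Finset ℕ) (v : ℕ) : ZChain n :=
  if h : v ∈ s ∧ s.card = n + 2 then
    ((-1 : ℤ) ^ ((s.filter (· < v)).card)) •
      Finsupp.single ⟨s.erase v, by simp [Finset.card_erase_of_mem h.1, h.2]⟩ 1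
  else 0

lemma single_congr {n : ℕ} {t t' : Finset ℕ} (h : t = t') (pf : t.card = n + 1)
    (pf' : t'.card = n + 1) (c : ℤ) :
    (Finsupp.single ⟨t, pf⟩ c : ZChain n) = Finsupp.single ⟨t', pf'⟩ c := by
  subst h; rfl

lemma simpBdry_eq_sum_face {n : ℕ} (s : Simp (n + 1)) :
    simpBdry ℤ s = ∑ v ∈ (s : Finset ℕ), face n (s : Finset ℕ) v := by
  unfold simpBdry
  rw [← Finset.sum_attach ((s : Finset ℕ)) (fun v => face n (s : Finset ℕ) v)]
  refine Finset.sum_congr rfl fun v _ => ?_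
  rw [face, dif_pos ⟨v.2, s.2⟩]

lemma face_eq {n : ℕ} {s : Finset ℕ} {v : ℕ} (h1 : v ∈ s) (h2 : s.card = n + 2) :
    face n s v = ((-1 : ℤ) ^ ((s.filter (· < v)).card)) •
      Finsupp.single ⟨s.erase v, by simp [Finset.card_erase_of_mem h1, h2]⟩ 1 := by
  rw [face, dif_pos ⟨h1, h2⟩]

lemma cone_single {n : ℕ} (x : ℕ) (s : Simp n) (c : ℤ) :
    cone x (Finsupp.single s c) =
      if h : x ∈ (s : Finset ℕ) then 0
      else
        (((-1 : ℤ) ^ (((s : Finset ℕ).filter (· < x)).card)) * c) •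
          Finsupp.single ⟨insert x (s : Finset ℕ), by
            simp [Finset.card_insert_of_notMem h, s.2]⟩ 1 := by
  unfold cone
  refine Finsupp.sum_single_index ?_
  split <;> simp

lemma bdry_single {n : ℕ} (s : Simp (n + 1)) (c : ℤ) :
    bdry (Finsupp.single s c) = c • simpBdry ℤ s := by
  unfold bdry
  exact Finsupp.sum_single_index (zero_smul ℤ _)

lemma filter_lt_erase (s : Finset ℕ) (x : ℕ) :
    (s.erase x).filter (· < x) = s.filter (· < x) := by
  rw [Finset.filter_erase]
  exact Finset.erase_eq_of_notMem (by simp)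

lemma filter_lt_insert_self (s : Finset ℕ) (x : ℕ) :
    ((insert x s).filter (· < x)) = s.filter (· < x) := by
  rw [Finset.filter_insert, if_neg (lt_irrefl x)]


lemma key_term {n : ℕ} (x v : ℕ) (s : Finset ℕ) (hs : s.card = n + 2) (hv : v ∈ s)
    (hx : x ∉ s) (c : ℤ) :
    ((-1 : ℤ) ^ ((s.filter (· < x)).card) * c) • face (n + 1) (insert x s) v
      = -(c • cone x (face n s v)) := by
  classical
  have hxv : x ≠ v := fun h => hx (h ▸ hv)
  have hxe : x ∉ s.erase v := fun h => hx (Finset.mem_of_mem_erase h)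
  have hcard : (insert x s).card = (n + 1) + 2 := by
    rw [Finset.card_insert_of_notMem hx, hs]
  rw [face_eq (Finset.mem_insert_of_mem hv) hcard, face_eq hv hs, cone_zsmul,
    cone_single]
  rw [dif_neg hxe]
  rw [single_congr (Finset.erase_insert_of_ne hxv)
    (by simp [Finset.card_erase_of_mem (Finset.mem_insert_of_mem hv), hcard])
    (by simp [Finset.card_insert_of_notMem hxe, Finset.card_erase_of_mem hv, hs]) 1]
  rw [smul_smul, smul_smul, smul_smul, ← neg_smul]
  congr 1
  rcases lt_or_gt_of_ne hxv with h | h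
  · have hB : ((insert x s).filter (· < v)).card = (s.filter (· < v)).card + 1 := by
      rw [Finset.filter_insert, if_pos h,
        Finset.card_insert_of_notMem (fun hc => hx (Finset.mem_of_mem_filter x hc))]
    have hv' : v ∉ s.filter (· < x) := by
      intro hc
      have := (Finset.mem_filter.mp hc).2
      omega
    have hA : ((s.erase v).filter (· < x)).card = (s.filter (· < x)).card := by
      rw [Finset.filter_erase, Finset.erase_eq_of_notMem hv']
    rw [hB, hA, pow_succ]; ring
  · have hB : ((insert x s).filter (· < v)).card = (s.filter (· < v)).card := by
      rw [Finset.filter_insert, if_neg (by omega)]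
    have hA : (s.filter (· < x)).card = ((s.erase v).filter (· < x)).card + 1 := by
      rw [Finset.filter_erase]
      exact (Finset.card_erase_add_one (Finset.mem_filter.mpr ⟨hv, h⟩)).symm
    rw [hB, hA, pow_succ]; ring

lemma bdry_zero {n : ℕ} : bdry (0 : ZChain (n + 1)) = 0 := map_zero (bdryHom n)

lemma cone_finset_sum {n : ℕ} (x : ℕ) {ι : Type} (t : Finset ι) (g : ι → ZChain n) :
    cone x (∑ i ∈ t, g i) = ∑ i ∈ t, cone x (g i) :=
  map_sum (coneHom n x) g t

lemma smul_single_one {n : ℕ} (s : Simp n) (c : ℤ) :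
    c • (Finsupp.single s 1 : ZChain n) = Finsupp.single s c := by
  rw [Finsupp.smul_single, smul_eq_mul, mul_one]

lemma neg_one_sq_pow (A : ℕ) : ((-1 : ℤ)) ^ A * ((-1 : ℤ)) ^ A = 1 := by
  rw [← pow_add]
  exact Even.neg_one_pow ⟨A, rfl⟩

lemma bdry_cone_single {n : ℕ} (x : ℕ) (s : Simp (n + 1)) (c : ℤ) :
    bdry (cone x (Finsupp.single s c)) =
      Finsupp.single s c - cone x (c • simpBdry ℤ s) := by
  classical
  rw [cone_single, cone_zsmul, simpBdry_eq_sum_face, cone_finset_sum]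
  by_cases hx : x ∈ (s : Finset ℕ)
  · rw [dif_pos hx, bdry_zero]
    have hsum : ∑ v ∈ (s : Finset ℕ), cone x (face n (s : Finset ℕ) v)
        = Finsupp.single s 1 := by
      rw [Finset.sum_eq_single_of_mem x hx (fun v hv hvx => ?_)]
      · -- main term at x
        rw [face_eq hx s.2, cone_zsmul, cone_single, dif_neg (Finset.notMem_erase x _),
          mul_one, filter_lt_erase,
          single_congr (Finset.insert_erase hx)
            (by simp [Finset.card_insert_of_notMem (Finset.notMem_erase x _),
              Finset.card_erase_of_mem hx, s.2]) s.2 1,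
          smul_smul, neg_one_sq_pow, one_smul]
      · -- other terms vanish
        rw [face_eq hv s.2, cone_zsmul, cone_single,
          dif_pos (Finset.mem_erase.mpr ⟨Ne.symm hvx, hx⟩), smul_zero]
    rw [hsum, smul_single_one]
    simp
  · rw [dif_neg hx]
    have hcard : (insert x (s : Finset ℕ)).card = (n + 1) + 2 := by
      rw [Finset.card_insert_of_notMem hx, s.2]
    rw [bdry_zsmul, bdry_single, one_smul, simpBdry_eq_sum_face]
    have hco : ((⟨insert x (s : Finset ℕ), by
        simp [Finset.card_insert_of_notMem hx, s.2]⟩ : Simp (n + 2)) : Finset ℕ)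
        = insert x (s : Finset ℕ) := rfl
    rw [hco, Finset.sum_insert hx, smul_add]
    have h1 : ((-1 : ℤ) ^ (((s : Finset ℕ).filter (· < x)).card) * c) •
        face (n + 1) (insert x (s : Finset ℕ)) x = Finsupp.single s c := by
      rw [face_eq (Finset.mem_insert_self x _) hcard, filter_lt_insert_self,
        single_congr (Finset.erase_insert hx)
          (by simp [Finset.erase_insert hx, s.2]) s.2 1]
      rw [smul_smul, mul_assoc, mul_comm c, ← mul_assoc, neg_one_sq_pow, one_mul,
        smul_single_one]
    rw [h1, Finset.smul_sum, Finset.smul_sum]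
    rw [Finset.sum_congr rfl (fun v hv => key_term x v (s : Finset ℕ) s.2 hv hx c)]
    rw [Finset.sum_neg_distrib]
    abel

lemma bdry_cone_single₀ (x : ℕ) (s : Simp 0) (c : ℤ) :
    bdry (cone x (Finsupp.single s c)) =
      Finsupp.single s c - c • Finsupp.single (⟨{x}, by simp⟩ : Simp 0) 1 := by
  classical
  obtain ⟨v, hv⟩ := Finset.card_eq_one.mp s.2
  have hs : s = ⟨{v}, by simp⟩ := Subtype.ext hv
  subst hs
  rw [cone_single]
  by_cases hvx : x = v
  · subst hvx
    rw [dif_pos (by simp), bdry_zero, smul_single_one]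
    simp
  · have hx : x ∉ ({v} : Finset ℕ) := by simp [hvx]
    rw [dif_neg hx, bdry_zsmul, bdry_single, one_smul, simpBdry_eq_sum_face]
    have hco : ((⟨insert x ({v} : Finset ℕ), by
        simp [Finset.card_insert_of_notMem hx]⟩ : Simp (0 + 1)) : Finset ℕ)
        = insert x ({v} : Finset ℕ) := rfl
    rw [hco, Finset.sum_insert hx, Finset.sum_singleton]
    have hcard : (insert x ({v} : Finset ℕ)).card = 0 + 2 := by
      rw [Finset.card_insert_of_notMem hx]; rfl
    have hxv : (insert x ({v} : Finset ℕ)).erase v = {x} := by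
      rw [Finset.erase_insert_of_ne hvx, Finset.erase_singleton]; rfl
    rw [face_eq (Finset.mem_insert_self x _) hcard,
      face_eq (by simp : v ∈ insert x ({v} : Finset ℕ)) hcard,
      filter_lt_insert_self,
      single_congr (Finset.erase_insert hx) (by simp [Finset.erase_insert hx]) (by simp) 1,
      single_congr hxv (by simp [hxv]) (by simp) 1]
    rw [smul_add, smul_smul, smul_smul,
      mul_assoc, mul_comm c, ← mul_assoc, neg_one_sq_pow, one_mul, smul_single_one]
    have hcoef : ((-1 : ℤ)) ^ ((({v} : Finset ℕ).filter (· < x)).card) * c *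
        ((-1 : ℤ)) ^ (((insert x ({v} : Finset ℕ)).filter (· < v)).card) = -c := by
      rcases lt_or_gt_of_ne hvx with h | h
      · have e1 : (({v} : Finset ℕ).filter (· < x)).card = 0 := by
          simp [Finset.filter_singleton, not_lt.mpr (le_of_lt h)]
        have e2 : ((insert x ({v} : Finset ℕ)).filter (· < v)).card = 1 := by
          simp [Finset.filter_insert, Finset.filter_singleton, h]
        rw [e1, e2]; ring
      · have e1 : (({v} : Finset ℕ).filter (· < x)).card = 1 := by
          simp [Finset.filter_singleton, h]
        have e2 : ((insert x ({v} : Finset ℕ)).filter (· < v)).card = 0 := by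
          simp [Finset.filter_insert, Finset.filter_singleton, not_lt.mpr (le_of_lt h),
            Nat.lt_irrefl]
        rw [e1, e2]; ring
    rw [hcoef, neg_smul, smul_single_one, sub_eq_add_neg]

lemma bdry_cone {n : ℕ} (x : ℕ) (U : ZChain (n + 1)) :
    bdry (cone x U) = U - cone x (bdry U) := by
  refine Finsupp.induction_linear
    (motive := fun U => bdry (cone x U) = U - cone x (bdry U)) U ?_ ?_ ?_
  · rw [cone_zero, bdry_zero, bdry_zero, cone_zero, sub_zero]
  · intro f g hf hg
    rw [cone_add, bdry_add, hf, hg, bdry_add, cone_add]; abel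
  · intro a b
    rw [bdry_cone_single, bdry_single]

lemma bdry_cone₀ (x : ℕ) (U : ZChain 0) :
    bdry (cone x U) =
      U - (U.sum fun _ c => c) • Finsupp.single (⟨{x}, by simp⟩ : Simp 0) 1 := by
  refine Finsupp.induction_linear
    (motive := fun U => bdry (cone x U) =
      U - (U.sum fun _ c => c) • Finsupp.single (⟨{x}, by simp⟩ : Simp 0) 1) U ?_ ?_ ?_
  · rw [cone_zero, bdry_zero, Finsupp.sum_zero_index, zero_smul, sub_zero]
  · intro f g hf hg
    rw [cone_add, bdry_add, hf, hg,
      Finsupp.sum_add_index' (fun _ => rfl) (fun _ _ _ => rfl), add_smul]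
    abel
  · intro a b
    rw [bdry_cone_single₀, Finsupp.sum_single_index rfl]

/-- The link of `x` in `M`. -/
noncomputable def linkC (x : ℕ) {n : ℕ} (M : ZChain (n + 1)) : ZChain n :=
  M.sum fun s c =>
    if h : x ∈ (s : Finset ℕ) then
      ((-1 : ℤ) ^ ((((s : Finset ℕ).erase x).filter (· < x)).card) * c) •
        Finsupp.single ⟨(s : Finset ℕ).erase x, by
          simp [Finset.card_erase_of_mem h, s.2]⟩ 1
    else 0

/-- The part of `M` away from `x`. -/
noncomputable def rest (x : ℕ) {n : ℕ} (M : ZChain (n + 1)) : ZChain (n + 1) :=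
  M.sum fun s c => if x ∈ (s : Finset ℕ) then 0 else Finsupp.single s c

lemma not_mem_vert_linkC (x : ℕ) {n : ℕ} (M : ZChain (n + 1)) :
    x ∉ vert (linkC x M) := by
  classical
  rw [mem_vert_iff]
  rintro ⟨t, ht, hxt⟩
  unfold linkC at ht
  obtain ⟨s, _, ht1⟩ := Finset.mem_biUnion.mp (Finsupp.support_sum ht)
  by_cases h : x ∈ (s : Finset ℕ)
  · rw [dif_pos h] at ht1
    have h2 := Finsupp.support_single_subset (Finsupp.support_smul ht1)
    rw [Finset.mem_singleton] at h2
    rw [h2] at hxt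
    exact Finset.notMem_erase x _ hxt
  · rw [dif_neg h] at ht1
    simp at ht1

lemma not_mem_vert_rest (x : ℕ) {n : ℕ} (M : ZChain (n + 1)) :
    x ∉ vert (rest x M) := by
  classical
  rw [mem_vert_iff]
  rintro ⟨t, ht, hxt⟩
  unfold rest at ht
  obtain ⟨s, _, ht1⟩ := Finset.mem_biUnion.mp (Finsupp.support_sum ht)
  by_cases h : x ∈ (s : Finset ℕ)
  · rw [if_pos h] at ht1; simp at ht1
  · rw [if_neg h] at ht1
    have h2 := Finsupp.support_single_subset ht1
    rw [Finset.mem_singleton] at h2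
    rw [h2] at hxt
    exact h hxt

lemma cone_linkC (x : ℕ) {n : ℕ} (M : ZChain (n + 1)) :
    cone x (linkC x M) =
      M.sum fun s c => if x ∈ (s : Finset ℕ) then Finsupp.single s c else 0 := by
  classical
  unfold linkC
  rw [← coneHom_apply, map_finsuppSum]
  refine Finsupp.sum_congr fun s _ => ?_
  simp only [coneHom_apply]
  by_cases h : x ∈ (s : Finset ℕ)
  · rw [dif_pos h, if_pos h, cone_zsmul, cone_single,
      dif_neg (Finset.notMem_erase x _),
      single_congr (Finset.insert_erase h)
        (by simp [Finset.card_insert_of_notMem (Finset.notMem_erase x _),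
          Finset.card_erase_of_mem h, s.2]) s.2 1,
      mul_one, smul_smul, mul_assoc, mul_comm (M s), ← mul_assoc, neg_one_sq_pow,
      one_mul, smul_single_one]
  · rw [dif_neg h, if_neg h, cone_zero]

lemma cone_linkC_add_rest (x : ℕ) {n : ℕ} (M : ZChain (n + 1)) :
    cone x (linkC x M) + rest x M = M := by
  classical
  rw [cone_linkC]
  unfold rest
  rw [← Finsupp.sum_add]
  have h : (M.sum fun s c =>
      (if x ∈ (s : Finset ℕ) then Finsupp.single s c else 0) +
        (if x ∈ (s : Finset ℕ) then 0 else Finsupp.single s c)) =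
      M.sum Finsupp.single := by
    refine Finsupp.sum_congr fun s _ => ?_
    by_cases h : x ∈ (s : Finset ℕ) <;> simp [h]
  rw [h, Finsupp.sum_single]

lemma cone_apply_of_not_mem {n : ℕ} (x : ℕ) (V : ZChain n) {w : Simp (n + 1)}
    (hw : x ∉ (w : Finset ℕ)) : cone x V w = 0 := by
  classical
  unfold cone
  rw [Finsupp.sum_apply]
  refine Finset.sum_eq_zero fun s _ => ?_
  dsimp only
  by_cases h : x ∈ (s : Finset ℕ)
  · rw [dif_pos h]; rfl
  · rw [dif_neg h, Finsupp.smul_apply, Finsupp.single_eq_of_ne, smul_zero]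
    intro he
    apply hw
    rw [he]
    exact Finset.mem_insert_self x _

lemma eq_zero_of_cone_eq_zero {n : ℕ} {x : ℕ} {V : ZChain n}
    (hx : x ∉ vert V) (h : cone x V = 0) : V = 0 := by
  classical
  ext t
  by_cases hxt : x ∈ (t : Finset ℕ)
  · exact apply_eq_zero_of_not_mem_vert hx hxt
  · by_cases ht : t ∈ V.support
    · exfalso
      have hV : V t ≠ 0 := Finsupp.mem_support_iff.mp ht
      have hc : cone x V ⟨insert x (t : Finset ℕ), by
          simp [Finset.card_insert_of_notMem hxt, t.2]⟩ = 0 := by rw [h]; rfl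
      unfold cone at hc
      rw [Finsupp.sum_apply, Finsupp.sum, ← Finset.add_sum_erase _ _ ht] at hc
      rw [Finset.sum_eq_zero (fun s hs => ?_), add_zero] at hc
      · rw [dif_neg hxt, Finsupp.smul_apply, Finsupp.single_apply, if_pos rfl,
          smul_eq_mul, mul_one] at hc
        rcases mul_eq_zero.mp hc with h1 | h1
        · exact pow_ne_zero _ (by norm_num : (-1 : ℤ) ≠ 0) h1
        · exact hV h1
      · have hst : s ≠ t := Finset.ne_of_mem_erase hs
        by_cases hxs : x ∈ (s : Finset ℕ)
        · rw [dif_pos hxs]; rfl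
        · rw [dif_neg hxs, Finsupp.smul_apply, Finsupp.single_apply, if_neg, smul_zero]
          intro he
          apply hst
          have h3 : (s : Finset ℕ) = (t : Finset ℕ) := by
            have h1 : insert x (s : Finset ℕ) = insert x (t : Finset ℕ) :=
              congrArg Subtype.val he
            have h2 := congrArg (fun u => u.erase x) h1
            simpa [Finset.erase_insert hxs, Finset.erase_insert hxt] using h2
          exact Subtype.ext h3
    · exact Finsupp.notMem_support_iff.mp ht

lemma vert_bdry_subset {n : ℕ} (M : ZChain (n + 1)) : vert (bdry M) ⊆ vert M := by
  intro x hx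
  obtain ⟨t, ht, hxt⟩ := mem_vert_iff.mp hx
  obtain ⟨s, hs, hts⟩ := support_bdry_subset ht
  exact mem_vert_iff.mpr ⟨s, hs, hts hxt⟩

lemma bdry_decomp (x : ℕ) {n : ℕ} (M : ZChain (n + 1)) :
    bdry M = bdry (cone x (linkC x M)) + bdry (rest x M) := by
  conv_lhs => rw [← cone_linkC_add_rest x M]
  exact bdry_add _ _

lemma x_apply_zero {n : ℕ} {x : ℕ} {M : ZChain (n + 1)} (hx : x ∉ vert (bdry M))
    {w : Simp n} (hw : x ∈ (w : Finset ℕ)) :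
    bdry (cone x (linkC x M)) w = 0 := by
  have he := bdry_decomp x M
  have h1 : bdry M w = bdry (cone x (linkC x M)) w + bdry (rest x M) w := by
    rw [he]; rfl
  have h2 : bdry M w = 0 := apply_eq_zero_of_not_mem_vert hx hw
  have h3 : bdry (rest x M) w = 0 := by
    refine apply_eq_zero_of_not_mem_vert (fun hc => ?_) hw
    exact not_mem_vert_rest x M (vert_bdry_subset _ hc)
  rw [h2, h3, add_zero] at h1
  exact h1.symm

lemma bdry_cone_linkC {n : ℕ} (x : ℕ) (M : ZChain (n + 1))
    (hx : x ∉ vert (bdry M)) (y : ℕ) :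
    bdry (cone y (linkC x M)) = linkC x M := by
  cases n with
  | zero =>
      rw [bdry_cone₀]
      have hε : ((linkC x M).sum fun _ c => c) = 0 := by
        have h0 : bdry (cone x (linkC x M)) (⟨{x}, by simp⟩ : Simp 0) = 0 :=
          x_apply_zero hx (by simp)
        rw [bdry_cone₀] at h0
        have hUw : linkC x M (⟨{x}, by simp⟩ : Simp 0) = 0 :=
          apply_eq_zero_of_not_mem_vert (not_mem_vert_linkC x M) (by simp)
        rw [Finsupp.sub_apply, hUw, zero_sub, neg_eq_zero, Finsupp.smul_apply,
          Finsupp.single_apply, if_pos rfl, smul_eq_mul, mul_one] at h0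
        exact h0
      rw [hε, zero_smul, sub_zero]
  | succ m =>
      rw [bdry_cone]
      have hcz : cone x (bdry (linkC x M)) = 0 := by
        ext w
        by_cases hw : x ∈ (w : Finset ℕ)
        · have h0 := x_apply_zero hx hw
          rw [bdry_cone] at h0
          have hUw : linkC x M w = 0 :=
            apply_eq_zero_of_not_mem_vert (not_mem_vert_linkC x M) hw
          rw [Finsupp.sub_apply, hUw, zero_sub, neg_eq_zero] at h0
          rw [h0]; rfl
        · rw [cone_apply_of_not_mem _ _ hw]; rfl
      have hbz : bdry (linkC x M) = 0 :=
        eq_zero_of_cone_eq_zero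
          (fun hc => not_mem_vert_linkC x M (vert_bdry_subset _ hc)) hcz
      rw [hbz, cone_zero, sub_zero]

lemma znorm_finsupp_sum_le {n m : ℕ} (V : ZChain m) (f : Simp m → ℤ → ZChain n) :
    znorm (V.sum f) ≤ ∑ s ∈ V.support, znorm (f s (V s)) := by
  rw [Finsupp.sum]
  exact znorm_sum_le _ _

lemma natAbs_neg_one_pow_mul (k : ℕ) (c : ℤ) :
    ((-1 : ℤ) ^ k * c).natAbs = c.natAbs := by
  rw [Int.natAbs_mul, Int.natAbs_pow]
  simp

lemma znorm_cone_lt {n : ℕ} {y : ℕ} {U : ZChain n} (hy : y ∈ vert U) :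
    znorm (cone y U) < znorm U := by
  classical
  obtain ⟨t₀, ht₀, hyt₀⟩ := mem_vert_iff.mp hy
  have h1 : znorm (cone y U) ≤
      ∑ s ∈ U.support, if y ∈ (s : Finset ℕ) then 0 else (U s).natAbs := by
    refine le_trans (znorm_finsupp_sum_le U _) (Finset.sum_le_sum fun s _ => ?_)
    by_cases h : y ∈ (s : Finset ℕ)
    · rw [dif_pos h, if_pos h, znorm_zero]
    · rw [dif_neg h, if_neg h, smul_single_one, znorm_single, natAbs_neg_one_pow_mul]
  refine lt_of_le_of_lt h1 ?_
  rw [znorm_eq_sum]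
  refine Finset.sum_lt_sum (fun s _ => ?_) ⟨t₀, ht₀, ?_⟩
  · split
    · exact Nat.zero_le _
    · exact le_refl _
  · rw [if_pos hyt₀]
    exact Nat.pos_of_ne_zero
      (fun h => Finsupp.mem_support_iff.mp ht₀ (Int.natAbs_eq_zero.mp h))

lemma znorm_linkC_le {n : ℕ} (x : ℕ) (M : ZChain (n + 1)) :
    znorm (linkC x M) ≤
      ∑ s ∈ M.support, if x ∈ (s : Finset ℕ) then (M s).natAbs else 0 := by
  classical
  refine le_trans (znorm_finsupp_sum_le M _) (Finset.sum_le_sum fun s _ => ?_)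
  by_cases h : x ∈ (s : Finset ℕ)
  · rw [dif_pos h, if_pos h, smul_single_one, znorm_single, natAbs_neg_one_pow_mul]
  · rw [dif_neg h, if_neg h, znorm_zero]

lemma znorm_rest_le {n : ℕ} (x : ℕ) (M : ZChain (n + 1)) :
    znorm (rest x M) +
      (∑ s ∈ M.support, if x ∈ (s : Finset ℕ) then (M s).natAbs else 0)
      ≤ znorm M := by
  classical
  have h1 : znorm (rest x M) ≤
      ∑ s ∈ M.support, if x ∈ (s : Finset ℕ) then 0 else (M s).natAbs := by
    refine le_trans (znorm_finsupp_sum_le M _) (Finset.sum_le_sum fun s _ => ?_)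
    by_cases h : x ∈ (s : Finset ℕ)
    · rw [if_pos h, if_pos h, znorm_zero]
    · rw [if_neg h, if_neg h, znorm_single]
  have h2 : (∑ s ∈ M.support, if x ∈ (s : Finset ℕ) then 0 else (M s).natAbs) +
      (∑ s ∈ M.support, if x ∈ (s : Finset ℕ) then (M s).natAbs else 0)
      = znorm M := by
    rw [← Finset.sum_add_distrib, znorm_eq_sum]
    refine Finset.sum_congr rfl fun s _ => ?_
    by_cases h : x ∈ (s : Finset ℕ) <;> simp [h]
  omega

lemma linkC_mem_support {n : ℕ} {x : ℕ} {M : ZChain (n + 1)} {s₀ : Simp (n + 1)}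
    (hs₀ : s₀ ∈ M.support) (hxs₀ : x ∈ (s₀ : Finset ℕ)) :
    (⟨(s₀ : Finset ℕ).erase x, by
      simp [Finset.card_erase_of_mem hxs₀, s₀.2]⟩ : Simp n) ∈ (linkC x M).support := by
  classical
  rw [Finsupp.mem_support_iff]
  unfold linkC
  rw [Finsupp.sum_apply, Finsupp.sum, ← Finset.add_sum_erase _ _ hs₀,
    Finset.sum_eq_zero (fun s hs => ?_), add_zero]
  · rw [dif_pos hxs₀, Finsupp.smul_apply, Finsupp.single_apply, if_pos rfl,
      smul_eq_mul, mul_one]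
    exact mul_ne_zero (pow_ne_zero _ (by norm_num)) (Finsupp.mem_support_iff.mp hs₀)
  · have hst : s ≠ s₀ := Finset.ne_of_mem_erase hs
    by_cases hxs : x ∈ (s : Finset ℕ)
    · rw [dif_pos hxs, Finsupp.smul_apply, Finsupp.single_apply, if_neg, smul_zero]
      intro he
      apply hst
      have h1 : (s : Finset ℕ).erase x = (s₀ : Finset ℕ).erase x :=
        congrArg Subtype.val he
      have h2 := congrArg (insert x) h1
      rw [Finset.insert_erase hxs, Finset.insert_erase hxs₀] at h2
      exact Subtype.ext h2
    · rw [dif_neg hxs]; rfl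

end TautProof

/-- a taut chain has no internal vertices. -/
theorem vert_of_taut {n : ℕ} (M : ZChain (n + 1)) (hM : Taut M) :
    vert M = vert (bdry M) := by
  classical
  open TautProof in
  refine Finset.Subset.antisymm ?_ (TautProof.vert_bdry_subset M)
  intro x hxM
  by_contra hx
  obtain ⟨s₀, hs₀, hxs₀⟩ := TautProof.mem_vert_iff.mp hxM
  set U := TautProof.linkC x M with hU
  set P := TautProof.rest x M with hP
  have ht₀ := TautProof.linkC_mem_support hs₀ hxs₀
  have hcard : ((s₀ : Finset ℕ).erase x).card = n + 1 := by
    simp [Finset.card_erase_of_mem hxs₀, s₀.2]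
  obtain ⟨y, hy⟩ := Finset.card_pos.mp (by rw [hcard]; omega)
  have hyU : y ∈ vert U := TautProof.mem_vert_iff.mpr ⟨_, ht₀, hy⟩
  have hW : bdry (cone y U) = U := TautProof.bdry_cone_linkC x M hx y
  have hNP : cone x U + P = M := TautProof.cone_linkC_add_rest x M
  have hbM : bdry M = U + bdry P := by
    conv_lhs => rw [← hNP]
    rw [TautProof.bdry_add, TautProof.bdry_cone_linkC x M hx x]
  have hM' : bdry (cone y U + P) = bdry M := by
    rw [TautProof.bdry_add, hW, hbM]
  have hlt : znorm (cone y U + P) < znorm M := by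
    have h1 := TautProof.znorm_add_le (cone y U) P
    have h2 := TautProof.znorm_cone_lt hyU
    have h3 := TautProof.znorm_linkC_le x M
    have h4 := TautProof.znorm_rest_le x M
    rw [← hU] at h3
    rw [← hP] at h4
    omega
  have hz : zvol (bdry M) ≤ znorm (cone y U + P) :=
    Nat.sInf_le ⟨cone y U + P, hM', rfl⟩
  rw [Taut] at hM
  omega
end

section
/- Let A, B be finite vertex sets with |A ∩ B| ≤ n. Then the map (X,Y) ↦ X + Y from C_n(A) ⊕ C_n(B) to C_n(A ∪ B) is injective; that is, X and Y are uniquely recoverable from X + Y. -/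
/-- if `|A ∩ B| ≤ n`, an `n`-chain supported on `A` plus an
`n`-chain supported on `B` determines the two summands. -/
theorem recover_chains {n : ℕ} (A B : Finset ℕ) (h : (A ∩ B).card ≤ n)
    (X X' : ZChain n) (Y Y' : ZChain n)
    (hX : suppOn A X) (hX' : suppOn A X') (hY : suppOn B Y) (hY' : suppOn B Y')
    (hsum : X + Y = X' + Y') : X = X' ∧ Y = Y' := by
  have hD : X - X' = Y' - Y := by
    rw [sub_eq_sub_iff_add_eq_add]
    simpa [add_comm] using hsum
  have hzero : X - X' = 0 := by
    ext s
    by_contra hc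
    have hs : s ∈ (X - X').support := Finsupp.mem_support_iff.mpr (by simpa using hc)
    have hsA : (s : Finset ℕ) ⊆ A := by
      have := Finsupp.support_sub hs
      rcases Finset.mem_union.mp this with h1 | h1
      · exact hX s h1
      · exact hX' s h1
    have hsB : (s : Finset ℕ) ⊆ B := by
      have hs' : s ∈ (Y' - Y).support := by rwa [← hD]
      have := Finsupp.support_sub hs'
      rcases Finset.mem_union.mp this with h1 | h1
      · exact hY' s h1
      · exact hY s h1
    have hsub : (s : Finset ℕ) ⊆ A ∩ B := Finset.subset_inter hsA hsB
    have := Finset.card_le_card hsub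
    rw [s.2] at this
    omega
  refine ⟨sub_eq_zero.mp hzero, ?_⟩
  have : Y' - Y = 0 := by rw [← hD]; exact hzero
  exact (sub_eq_zero.mp this).symm
end

section
/- Let A, B be finite vertex sets with |A ∩ B| ≤ n + 1. Then the map (X,Y) ↦ X + Y from Z_n(A) ⊕ Z_n(B) (pairs of integral n-cycles) to Z_n(A ∪ B) is injective. -/
lemma bdry_add_s7 {n : ℕ} (M N : ZChain (n + 1)) : bdry (M + N) = bdry M + bdry N := by
  unfold bdry
  apply Finsupp.sum_add_index' (by simp) (by intros; rw [add_smul])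

lemma simpBdry_ne_zero {n : ℕ} (s : Simp (n + 1)) : simpBdry ℤ s ≠ 0 := by
  have hne : (s : Finset ℕ).Nonempty := by
    rw [← Finset.card_pos, s.2]; omega
  obtain ⟨v, hv⟩ := hne
  intro hcon
  have := congrArg (fun f => f ⟨(s : Finset ℕ).erase v, by
    simp [Finset.card_erase_of_mem hv, s.2]⟩) hcon
  simp only [simpBdry, Finsupp.coe_finset_sum, Finset.sum_apply, Finsupp.coe_zero,
    Pi.zero_apply, Finsupp.smul_apply] at this
  rw [Finset.sum_eq_single (⟨v, hv⟩ : {x // x ∈ (s : Finset ℕ)})] at this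
  · simp at this
  · intro b _ hb
    have : (s : Finset ℕ).erase (b : ℕ) ≠ (s : Finset ℕ).erase v := by
      intro he
      apply hb
      apply Subtype.ext
      by_contra hne
      have hmem : v ∈ (s : Finset ℕ).erase (b : ℕ) :=
        Finset.mem_erase.2 ⟨fun h => hne h.symm, hv⟩
      rw [he] at hmem
      exact (Finset.mem_erase.1 hmem).1 rfl
    simp [Finsupp.single_apply, Subtype.ext_iff, this]
  · simp

/-- if `|A ∩ B| ≤ n + 1`, an `n`-cycle supported on `A` plus an
`n`-cycle supported on `B` determines the two summands.  (Here `n`-cycles are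
represented by chains of dimension `n + 1` in the `ZChain` indexing, i.e. the
hypothesis reads `|A ∩ B| ≤ (n + 1) + 1`.) -/
theorem recover_cycles {n : ℕ} (A B : Finset ℕ) (h : (A ∩ B).card ≤ n + 2)
    (X X' : ZChain (n + 1)) (Y Y' : ZChain (n + 1))
    (hXc : bdry X = 0) (hX'c : bdry X' = 0) (hYc : bdry Y = 0) (hY'c : bdry Y' = 0)
    (hX : suppOn A X) (hX' : suppOn A X') (hY : suppOn B Y) (hY' : suppOn B Y')
    (hsum : X + Y = X' + Y') : X = X' ∧ Y = Y' := by
  have hXX : X - X' = Y' - Y := by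
    rw [sub_eq_sub_iff_add_eq_add]; exact hsum.trans (add_comm X' Y')
  set D := X - X' with hDdef
  have hbD : bdry D = 0 := by
    have h1 : bdry (D + X') = bdry D + bdry X' := bdry_add_s7 _ _
    rw [show D + X' = X by rw [hDdef]; abel] at h1
    rw [hXc, hX'c, add_zero] at h1
    exact h1.symm
  have key : ∀ s ∈ D.support, (s : Finset ℕ) = A ∩ B := by
    intro s hs
    have hsA : (s : Finset ℕ) ⊆ A := by
      have := Finsupp.support_sub hs
      rcases Finset.mem_union.1 this with h1 | h1
      · exact hX s h1
      · exact hX' s h1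
    have hsB : (s : Finset ℕ) ⊆ B := by
      rw [hXX] at hs
      have := Finsupp.support_sub hs
      rcases Finset.mem_union.1 this with h1 | h1
      · exact hY' s h1
      · exact hY s h1
    have hsub : (s : Finset ℕ) ⊆ A ∩ B := Finset.subset_inter hsA hsB
    refine Finset.eq_of_subset_of_card_le hsub ?_
    rw [s.2]; exact h
  have hDzero : D = 0 := by
    by_contra hne
    obtain ⟨a, ha⟩ := Finsupp.support_nonempty_iff.2 hne
    have hsub : D.support ⊆ {a} := by
      intro b hb
      simp only [Finset.mem_singleton]
      exact Subtype.ext ((key b hb).trans (key a ha).symm)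
    have hD1 := Finsupp.support_subset_singleton.1 hsub
    rw [hD1] at hbD
    unfold bdry at hbD
    rw [Finsupp.sum_single_index (by simp)] at hbD
    rcases smul_eq_zero.1 hbD with hc | hc
    · exact Finsupp.mem_support_iff.1 ha hc
    · exact simpBdry_ne_zero a hc
  have hX4 : X = X' := by
    have := sub_eq_zero.1 hDzero
    exact this
  refine ⟨hX4, ?_⟩
  rw [hX4] at hsum
  exact (add_right_injective X' hsum)
end

section
/- Taut fillings split under almost disjoint union when n ≥ 2: if X ∈ Z_n(A), Y ∈ Z_n(B) with |A ∩ B| ≤ n + 1 and n ≥ 2, then every taut integral (n+1)-chain M with ∂M = X + Y decomposes as M = M_X + M_Y with ∂M_X = X, ∂M_Y = Y, |M| = |M_X| + |M_Y|, and M_X, M_Y taut. -/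
namespace TS
open Finset



/-! ### parity helper -/

lemma negpow_mod (a : ℕ) : ((-1:ℤ))^a = (-1)^(a%2) := by
  conv_lhs => rw [← Nat.div_add_mod a 2]
  rw [pow_add, pow_mul]
  norm_num

lemma negpow {a b : ℕ} (h : a % 2 = b % 2) : ((-1:ℤ))^a = (-1)^b := by
  rw [negpow_mod a, negpow_mod b, h]

/-! ### filter-card lemmas -/

lemma card_filter_erase (u : Finset ℕ) (w x : ℕ) (hw : w ∈ u) :
    (u.filter (· < x)).card
      = ((u.erase w).filter (· < x)).card + (if w < x then 1 else 0) := by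
  rw [Finset.filter_erase]
  by_cases h : w < x
  · rw [if_pos h, Finset.card_erase_of_mem (by simp [hw, h])]
    have : 0 < (u.filter (· < x)).card :=
      Finset.card_pos.2 ⟨w, by simp [hw, h]⟩
    omega
  · rw [if_neg h, Finset.erase_eq_of_notMem (by simp [h]), add_zero]

lemma card_filter_insert (u : Finset ℕ) (w x : ℕ) (hw : w ∉ u) :
    ((insert w u).filter (· < x)).card
      = (u.filter (· < x)).card + (if w < x then 1 else 0) := by
  rw [Finset.filter_insert]
  by_cases h : w < x
  · rw [if_pos h, if_pos h, Finset.card_insert_of_notMem (by simp [hw])]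
  · rw [if_neg h, if_neg h, add_zero]

/-! ### linearity of bdry -/

noncomputable def bdryHom {n : ℕ} : ZChain (n+1) →ₗ[ℤ] ZChain n :=
  Finsupp.lsum ℤ fun s => LinearMap.toSpanSingleton ℤ _ (simpBdry ℤ s)

lemma bdry_eq {n : ℕ} (M : ZChain (n+1)) : bdry M = bdryHom M := by
  simp [bdry, bdryHom, Finsupp.lsum_apply, Finsupp.sum, LinearMap.toSpanSingleton_apply]

lemma bdry_add {n : ℕ} (M N : ZChain (n+1)) : bdry (M + N) = bdry M + bdry N := by
  simp [bdry_eq, map_add]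

lemma bdry_sub {n : ℕ} (M N : ZChain (n+1)) : bdry (M - N) = bdry M - bdry N := by
  simp [bdry_eq, map_sub]

lemma bdry_smul {n : ℕ} (c : ℤ) (M : ZChain (n+1)) : bdry (c • M) = c • bdry M := by
  simp [bdry_eq, map_smul]

lemma bdry_single {n : ℕ} (s : Simp (n+1)) (c : ℤ) :
    bdry (Finsupp.single s c) = c • simpBdry ℤ s := by
  rw [bdry, Finsupp.sum_single_index]; simp

lemma bdry_finset_sum {n : ℕ} {ι : Type*} (t : Finset ι) (F : ι → ZChain (n+1)) :
    bdry (∑ i ∈ t, F i) = ∑ i ∈ t, bdry (F i) := by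
  simp only [bdry_eq]; exact map_sum bdryHom F t

/-! ### znorm lemmas -/

lemma znorm_eq_sum_of {n : ℕ} (M : ZChain n) (S : Finset (Simp n))
    (hS : M.support ⊆ S) : znorm M = ∑ t ∈ S, (M t).natAbs := by
  rw [znorm, Finsupp.sum_of_support_subset M hS _ (by simp)]

lemma znorm_zero {n : ℕ} : znorm (0 : ZChain n) = 0 := by simp [znorm]

lemma znorm_single {n : ℕ} (t : Simp n) (c : ℤ) :
    znorm (Finsupp.single t c) = c.natAbs := by
  rw [znorm, Finsupp.sum_single_index rfl]

lemma znorm_add_le {n : ℕ} (M N : ZChain n) : znorm (M + N) ≤ znorm M + znorm N := by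
  rw [znorm_eq_sum_of (M+N) (M.support ∪ N.support)
      (Finsupp.support_add),
    znorm_eq_sum_of M (M.support ∪ N.support) Finset.subset_union_left,
    znorm_eq_sum_of N (M.support ∪ N.support) Finset.subset_union_right,
    ← Finset.sum_add_distrib]
  apply Finset.sum_le_sum
  intro t _
  simpa using Int.natAbs_add_le (M t) (N t)

lemma znorm_smul {n : ℕ} (c : ℤ) (M : ZChain n) :
    znorm (c • M) = c.natAbs * znorm M := by
  rw [znorm_eq_sum_of (c • M) M.support (Finsupp.support_smul),
    znorm_eq_sum_of M M.support le_rfl, Finset.mul_sum]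
  apply Finset.sum_congr rfl
  intro t _
  simp [Int.natAbs_mul]

lemma znorm_finset_sum_le {n : ℕ} {ι : Type*} (t : Finset ι) (F : ι → ZChain n) :
    znorm (∑ i ∈ t, F i) ≤ ∑ i ∈ t, znorm (F i) := by
  classical
  induction t using Finset.cons_induction with
  | empty => simp [znorm_zero]
  | cons a t ha ih =>
    rw [Finset.sum_cons, Finset.sum_cons]
    exact le_trans (znorm_add_le _ _) (by omega)

/-! ### zvol lemmas -/

lemma zvol_le {n : ℕ} (X : ZChain n) (W : ZChain (n+1)) (hW : bdry W = X) :
    zvol X ≤ znorm W :=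
  Nat.sInf_le ⟨W, hW, rfl⟩

lemma zvol_exists {n : ℕ} (X : ZChain n) (W : ZChain (n+1)) (hW : bdry W = X) :
    ∃ V : ZChain (n+1), bdry V = X ∧ znorm V = zvol X := by
  have hne : {m : ℕ | ∃ M : ZChain (n + 1), bdry M = X ∧ znorm M = m}.Nonempty :=
    ⟨znorm W, W, hW, rfl⟩
  have := Nat.sInf_mem hne
  obtain ⟨V, hV1, hV2⟩ := this
  exact ⟨V, hV1, hV2⟩

/-! ### simpBdry coefficients -/

lemma simpBdry_apply {k : ℕ} (s : Simp (k+1)) (u : Simp k) :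
    (simpBdry ℤ s) u = ∑ v ∈ (s:Finset ℕ).attach,
      (if (s:Finset ℕ).erase ↑v = (u:Finset ℕ)
        then ((-1:ℤ)^(((s:Finset ℕ).filter (· < (v:ℕ))).card)) else 0) := by
  rw [simpBdry, Finsupp.finset_sum_apply]
  apply Finset.sum_congr rfl
  intro v _
  rw [Finsupp.smul_apply, Finsupp.single_apply]
  by_cases hh : (s:Finset ℕ).erase ↑v = (u:Finset ℕ)
  · rw [if_pos hh, if_pos (by exact Subtype.ext hh), smul_eq_mul, mul_one]
  · rw [if_neg hh, if_neg (by intro hc; exact hh (congrArg Subtype.val hc)), smul_eq_mul,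
      mul_zero]

lemma simpBdry_apply_face {k : ℕ} (s : Simp (k+1)) (v : ℕ) (hv : v ∈ (s:Finset ℕ))
    (u : Simp k) (hu : (u:Finset ℕ) = (s:Finset ℕ).erase v) :
    (simpBdry ℤ s) u = (-1)^(((s:Finset ℕ).filter (· < v)).card) := by
  rw [simpBdry_apply]
  rw [Finset.sum_eq_single_of_mem (⟨v, hv⟩ : {x // x ∈ (s:Finset ℕ)})
    (Finset.mem_attach _ _)]
  · rw [if_pos hu.symm]
  · intro w _ hwv
    apply if_neg
    intro hc
    apply hwv
    apply Subtype.ext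
    exact (Finset.erase_inj (s:Finset ℕ) w.2).1 (hc.trans hu)

lemma smul_simpBdry_eq_zero {k : ℕ} (s : Simp (k+1)) (c : ℤ)
    (h : c • simpBdry ℤ s = 0) : c = 0 := by
  have hne : (s:Finset ℕ).Nonempty := Finset.card_pos.1 (by rw [s.2]; omega)
  set v := (s:Finset ℕ).min' hne with hv
  have hvmem : v ∈ (s:Finset ℕ) := Finset.min'_mem _ _
  have hcard : ((s:Finset ℕ).erase v).card = k + 1 := by
    rw [Finset.card_erase_of_mem hvmem, s.2]
    omega
  have := DFunLike.congr_fun h (⟨(s:Finset ℕ).erase v, hcard⟩ : Simp k)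
  rw [Finsupp.smul_apply, simpBdry_apply_face s v hvmem _ rfl] at this
  simp only [Finsupp.coe_zero, Pi.zero_apply, smul_eq_mul] at this
  rcases mul_eq_zero.1 this with h1 | h1
  · exact h1
  · exact absurd h1 (pow_ne_zero _ (by norm_num))

/-! ### support of bdry -/

lemma simpBdry_support_subset {k : ℕ} (s : Simp (k+1)) :
    ∀ u ∈ (simpBdry ℤ s).support, (u:Finset ℕ) ⊆ (s:Finset ℕ) := by
  intro u hu
  rw [simpBdry] at hu
  have := Finsupp.support_finset_sum (f := fun v : {x // x ∈ (s:Finset ℕ)} =>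
    ((-1 : ℤ) ^ (((s : Finset ℕ).filter (· < (v : ℕ))).card)) •
      Finsupp.single (⟨(s : Finset ℕ).erase (v : ℕ), by
          have hv := v.2
          simp [Finset.card_erase_of_mem hv, s.2]⟩ : Simp k) 1) hu
  rw [Finset.mem_biUnion] at this
  obtain ⟨v, -, hv⟩ := this
  have h2 := Finsupp.support_smul hv
  have h3 := Finsupp.support_single_subset h2
  rw [Finset.mem_singleton] at h3
  rw [h3]
  exact Finset.erase_subset _ _

lemma bdry_support_subset {k : ℕ} (W : ZChain (k+1)) :
    ∀ u ∈ (bdry W).support, ∃ s ∈ W.support, (u:Finset ℕ) ⊆ (s:Finset ℕ) := by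
  intro u hu
  rw [bdry] at hu
  have := Finsupp.support_sum hu
  rw [Finset.mem_biUnion] at this
  obtain ⟨s, hs, hmem⟩ := this
  exact ⟨s, hs, simpBdry_support_subset s u (Finsupp.support_smul hmem)⟩

/-! ### cycles with small support vanish -/

lemma small_cycle_zero {k : ℕ} (Z : ZChain (k+1)) (hZ : bdry Z = 0)
    (W : Finset ℕ) (hW : W.card ≤ k + 2)
    (hsupp : ∀ t ∈ Z.support, (t:Finset ℕ) ⊆ W) : Z = 0 := by
  by_contra hne
  obtain ⟨t0, ht0⟩ := Finsupp.support_nonempty_iff.2 hne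
  have hall : ∀ t ∈ Z.support, t = t0 := by
    intro t ht
    have h1 : (t:Finset ℕ) = W :=
      Finset.eq_of_subset_of_card_le (hsupp t ht) (by rw [t.2]; omega)
    have h2 : (t0:Finset ℕ) = W :=
      Finset.eq_of_subset_of_card_le (hsupp t0 ht0) (by rw [t0.2]; omega)
    exact Subtype.ext (h1.trans h2.symm)
  have hZeq : Z = Finsupp.single t0 (Z t0) := by
    ext t
    by_cases ht : t = t0
    · rw [ht, Finsupp.single_eq_same]
    · rw [Finsupp.single_eq_of_ne' (Ne.symm ht)]
      by_contra hc
      exact ht (hall t (Finsupp.mem_support_iff.2 hc))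
  rw [hZeq, bdry_single] at hZ
  exact (Finsupp.mem_support_iff.1 ht0) (smul_simpBdry_eq_zero _ _ hZ)

/-! ### ∂∂ = 0 -/

lemma bdry_simpBdry {k : ℕ} (s : Simp (k+2)) : bdry (simpBdry ℤ s) = 0 := by
  classical
  rw [simpBdry, bdry_finset_sum]
  ext u
  rw [Finsupp.finset_sum_apply, Finsupp.coe_zero, Pi.zero_apply]
  have step : ∀ v ∈ (s:Finset ℕ).attach,
      (bdry (((-1 : ℤ) ^ (((s : Finset ℕ).filter (· < (v:ℕ))).card)) •
        Finsupp.single (⟨(s : Finset ℕ).erase (v:ℕ), by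
          have hv := v.2; simp [Finset.card_erase_of_mem hv, s.2]⟩ : Simp (k+1)) 1)) u
      = ∑ w ∈ ((s:Finset ℕ).erase (v:ℕ)).attach,
          (if ((s:Finset ℕ).erase (v:ℕ)).erase (w:ℕ) = (u:Finset ℕ)
            then ((-1:ℤ)^(((s:Finset ℕ).filter (· < (v:ℕ))).card)
              * (-1:ℤ)^((((s:Finset ℕ).erase (v:ℕ)).filter (· < (w:ℕ))).card)) else 0) := by
    intro v _
    rw [show (((-1 : ℤ) ^ (((s : Finset ℕ).filter (· < (v:ℕ))).card)) •
        Finsupp.single (⟨(s : Finset ℕ).erase (v:ℕ), by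
          have hv := v.2; simp [Finset.card_erase_of_mem hv, s.2]⟩ : Simp (k+1)) 1)
      = Finsupp.single (⟨(s : Finset ℕ).erase (v:ℕ), by
          have hv := v.2; simp [Finset.card_erase_of_mem hv, s.2]⟩ : Simp (k+1))
          ((-1 : ℤ) ^ (((s : Finset ℕ).filter (· < (v:ℕ))).card)) by
        rw [Finsupp.smul_single, smul_eq_mul, mul_one]]
    rw [bdry_single, Finsupp.smul_apply, simpBdry_apply, smul_eq_mul, Finset.mul_sum]
    apply Finset.sum_congr rfl
    intro w _
    by_cases hh : ((s:Finset ℕ).erase (v:ℕ)).erase (w:ℕ) = (u:Finset ℕ)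
    · rw [if_pos hh, if_pos hh]
    · rw [if_neg hh, if_neg hh, mul_zero]
  rw [Finset.sum_congr rfl step]
  -- now a pure double sum; drop the attach
  rw [Finset.sum_attach ((s:Finset ℕ)) (fun v => ∑ w ∈ ((s:Finset ℕ).erase v).attach,
          (if ((s:Finset ℕ).erase v).erase (w:ℕ) = (u:Finset ℕ)
            then ((-1:ℤ)^(((s:Finset ℕ).filter (· < v)).card)
              * (-1:ℤ)^((((s:Finset ℕ).erase v).filter (· < (w:ℕ))).card)) else 0))]
  have step2 : ∀ v ∈ (s:Finset ℕ), (∑ w ∈ ((s:Finset ℕ).erase v).attach,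
          (if ((s:Finset ℕ).erase v).erase (w:ℕ) = (u:Finset ℕ)
            then ((-1:ℤ)^(((s:Finset ℕ).filter (· < v)).card)
              * (-1:ℤ)^((((s:Finset ℕ).erase v).filter (· < (w:ℕ))).card)) else 0))
      = ∑ w ∈ (s:Finset ℕ).erase v,
          (if ((s:Finset ℕ).erase v).erase w = (u:Finset ℕ)
            then ((-1:ℤ)^(((s:Finset ℕ).filter (· < v)).card)
              * (-1:ℤ)^((((s:Finset ℕ).erase v).filter (· < w)).card)) else 0) := by
    intro v _
    exact Finset.sum_attach ((s:Finset ℕ).erase v) (fun w =>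
      (if ((s:Finset ℕ).erase v).erase w = (u:Finset ℕ)
            then ((-1:ℤ)^(((s:Finset ℕ).filter (· < v)).card)
              * (-1:ℤ)^((((s:Finset ℕ).erase v).filter (· < w)).card)) else 0))
  rw [Finset.sum_congr rfl step2]
  -- antisymmetric double sum
  set F : ℕ → ℕ → ℤ := fun v w =>
    if w ∈ (s:Finset ℕ).erase v then
      (if ((s:Finset ℕ).erase v).erase w = (u:Finset ℕ)
        then ((-1:ℤ)^(((s:Finset ℕ).filter (· < v)).card)
          * (-1:ℤ)^((((s:Finset ℕ).erase v).filter (· < w)).card)) else 0)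
    else 0 with hF
  have hinner : ∀ v ∈ (s:Finset ℕ), (∑ w ∈ (s:Finset ℕ).erase v,
          (if ((s:Finset ℕ).erase v).erase w = (u:Finset ℕ)
            then ((-1:ℤ)^(((s:Finset ℕ).filter (· < v)).card)
              * (-1:ℤ)^((((s:Finset ℕ).erase v).filter (· < w)).card)) else 0))
      = ∑ w ∈ (s:Finset ℕ), F v w := by
    intro v _
    rw [Finset.sum_ite_mem]
    rw [Finset.inter_comm, Finset.inter_eq_left.2 (Finset.erase_subset _ _)]
  rw [Finset.sum_congr rfl hinner]
  have hskew : ∀ v ∈ (s:Finset ℕ), ∀ w ∈ (s:Finset ℕ), F v w + F w v = 0 := by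
    intro v hv w hw
    by_cases hvw : v = w
    · subst hvw
      simp [hF]
    · rw [hF]
      simp only
      rw [if_pos (Finset.mem_erase.2 ⟨Ne.symm hvw, hw⟩),
        if_pos (Finset.mem_erase.2 ⟨hvw, hv⟩)]
      have hcomm : ((s:Finset ℕ).erase v).erase w = ((s:Finset ℕ).erase w).erase v :=
        Finset.erase_right_comm
      by_cases hh : ((s:Finset ℕ).erase v).erase w = (u:Finset ℕ)
      · rw [if_pos hh, if_pos (hcomm ▸ hh)]
        rw [← pow_add, ← pow_add]
        have e1 : ((s:Finset ℕ).filter (· < w)).card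
            = (((s:Finset ℕ).erase v).filter (· < w)).card + (if v < w then 1 else 0) :=
          card_filter_erase _ v w hv
        have e2 : ((s:Finset ℕ).filter (· < v)).card
            = (((s:Finset ℕ).erase w).filter (· < v)).card + (if w < v then 1 else 0) :=
          card_filter_erase _ w v hw
        have hlt : (if v < w then 1 else 0) + (if w < v then 1 else 0) = 1 := by
          rcases Nat.lt_or_ge v w with h1 | h1
          · rw [if_pos h1, if_neg (by omega)]
          · have h2 : w < v := by omega
            rw [if_neg (by omega), if_pos h2]
        have : ((-1:ℤ))^(((s:Finset ℕ).filter (· < v)).card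
              + (((s:Finset ℕ).erase v).filter (· < w)).card)
            = (-1:ℤ)^((((s:Finset ℕ).filter (· < w)).card
              + (((s:Finset ℕ).erase w).filter (· < v)).card) + 1) := by
          apply negpow
          omega
        rw [this, pow_succ]
        ring
      · rw [if_neg hh, if_neg (by rw [← hcomm]; exact hh), add_zero]
  have h2S : (∑ v ∈ (s:Finset ℕ), ∑ w ∈ (s:Finset ℕ), F v w)
      + (∑ v ∈ (s:Finset ℕ), ∑ w ∈ (s:Finset ℕ), F v w) = 0 := by
    nth_rewrite 1 [Finset.sum_comm (s := (s:Finset ℕ)) (t := (s:Finset ℕ)) (f := F)]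
    rw [← Finset.sum_add_distrib]
    apply Finset.sum_eq_zero
    intro v hv
    rw [← Finset.sum_add_distrib]
    apply Finset.sum_eq_zero
    intro w hw
    exact hskew w hw v hv
  linarith [h2S]

lemma bdry_bdry {k : ℕ} (W : ZChain (k+2)) : bdry (bdry W) = 0 := by
  have h1 : bdry W = ∑ s ∈ W.support, W s • simpBdry ℤ s := rfl
  rw [h1, bdry_finset_sum]
  apply Finset.sum_eq_zero
  intro s _
  rw [bdry_smul, bdry_simpBdry, smul_zero]

/-! ### the projection K(A,p) -/

noncomputable def bOut (s A : Finset ℕ) : ℕ :=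
  if h : (s \ A).Nonempty then (s \ A).min' h else 0

lemma bOut_eq {s A : Finset ℕ} {b : ℕ} (h : s \ A = {b}) : bOut s A = b := by
  rw [bOut, dif_pos (h ▸ ⟨b, Finset.mem_singleton_self b⟩)]
  have h2 : ∀ x ∈ s \ A, x = b := by
    intro x hx
    rw [h] at hx
    exact Finset.mem_singleton.1 hx
  exact h2 _ (Finset.min'_mem _ _)

noncomputable def psign (A : Finset ℕ) (p : ℕ) (T : Finset ℕ) : ℤ :=
  (-1:ℤ)^((T.filter (· < bOut T A)).card + ((T ∩ A).filter (· < p)).card)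

lemma card_inter_of_one {T A : Finset ℕ} {m : ℕ} (hT : T.card = m+1) (h1 : (T\A).card = 1) :
    (T ∩ A).card = m := by
  have := Finset.card_inter_add_card_sdiff T A
  omega

lemma card_insert_inter {T A : Finset ℕ} {m : ℕ} {p : ℕ} (hT : T.card = m+1)
    (h1 : (T\A).card = 1) (hp : p ∉ T) : (insert p (T ∩ A)).card = m + 1 := by
  rw [Finset.card_insert_of_notMem (fun hc => hp (Finset.mem_of_mem_inter_left hc)),
    card_inter_of_one hT h1]

noncomputable def pSimp (A : Finset ℕ) (p : ℕ) {k : ℕ} (s : Simp k) : ZChain k :=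
  if hsub : (s:Finset ℕ) ⊆ A then Finsupp.single s 1
  else if h : ((s:Finset ℕ) \ A).card = 1 ∧ p ∉ (s:Finset ℕ) ∧ p ∈ A then
    psign A p ↑s • Finsupp.single
      (⟨insert p ((s:Finset ℕ) ∩ A), card_insert_inter s.2 h.1 h.2.1⟩ : Simp k) 1
  else 0

lemma pSimp_of_subset {A : Finset ℕ} {p : ℕ} {k : ℕ} {s : Simp k}
    (hs : (s:Finset ℕ) ⊆ A) : pSimp A p s = Finsupp.single s 1 := by
  rw [pSimp, dif_pos hs]

lemma pSimp_of_one {A : Finset ℕ} {p : ℕ} {k : ℕ} {s : Simp k}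
    (hs : ¬ (s:Finset ℕ) ⊆ A) (h1 : ((s:Finset ℕ) \ A).card = 1)
    (hps : p ∉ (s:Finset ℕ)) (hpA : p ∈ A) :
    pSimp A p s = psign A p ↑s • Finsupp.single
      (⟨insert p ((s:Finset ℕ) ∩ A), card_insert_inter s.2 h1 hps⟩ : Simp k) 1 := by
  rw [pSimp, dif_neg hs, dif_pos ⟨h1, hps, hpA⟩]

lemma pSimp_zero_of_mem {A : Finset ℕ} {p : ℕ} {k : ℕ} {s : Simp k}
    (hs : ¬ (s:Finset ℕ) ⊆ A) (hp : p ∈ (s:Finset ℕ)) : pSimp A p s = 0 := by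
  rw [pSimp, dif_neg hs, dif_neg (fun h => h.2.1 hp)]

lemma pSimp_zero_of_card {A : Finset ℕ} {p : ℕ} {k : ℕ} {s : Simp k}
    (hs : ¬ (s:Finset ℕ) ⊆ A) (h1 : ((s:Finset ℕ) \ A).card ≠ 1) : pSimp A p s = 0 := by
  rw [pSimp, dif_neg hs, dif_neg (fun h => h1 h.1)]

/-- total coefficient function for the projection of a simplex with vertex set `T`,
evaluated at the simplex `u`. -/
noncomputable def pCoe (A : Finset ℕ) (p : ℕ) (T U : Finset ℕ) : ℤ :=
  if T ⊆ A then (if T = U then 1 else 0)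
  else if (T \ A).card = 1 ∧ p ∉ T then
    (if insert p (T ∩ A) = U then psign A p T else 0)
  else 0

lemma single_coe_apply {k : ℕ} (T : Finset ℕ) (hT : T.card = k+1) (c : ℤ) (u : Simp k) :
    (Finsupp.single (⟨T, hT⟩ : Simp k) c) u = if T = (u:Finset ℕ) then c else 0 := by
  rw [Finsupp.single_apply]
  by_cases h : T = (u:Finset ℕ)
  · rw [if_pos h, if_pos (Subtype.ext h)]
  · rw [if_neg h, if_neg (fun hc => h (congrArg Subtype.val hc))]

lemma pSimp_apply {A : Finset ℕ} {p : ℕ} (hpA : p ∈ A) {k : ℕ} (s : Simp k) (u : Simp k) :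
    (pSimp A p s) u = pCoe A p (s:Finset ℕ) (u:Finset ℕ) := by
  by_cases hs : (s:Finset ℕ) ⊆ A
  · rw [pSimp_of_subset hs, pCoe, if_pos hs]
    exact single_coe_apply _ s.2 1 u
  · rw [pCoe, if_neg hs]
    by_cases h1 : ((s:Finset ℕ) \ A).card = 1
    · by_cases hps : p ∈ (s:Finset ℕ)
      · rw [pSimp_zero_of_mem hs hps, if_neg (fun h => h.2 hps), Finsupp.coe_zero,
          Pi.zero_apply]
      · rw [pSimp_of_one hs h1 hps hpA, if_pos ⟨h1, hps⟩, Finsupp.smul_apply,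
          single_coe_apply _ (card_insert_inter s.2 h1 hps) 1 u, smul_eq_mul]
        by_cases h2 : insert p ((s:Finset ℕ) ∩ A) = (u:Finset ℕ)
        · rw [if_pos h2, if_pos h2, mul_one]
        · rw [if_neg h2, if_neg h2, mul_zero]
    · rw [pSimp_zero_of_card hs h1, if_neg (fun h => h1 h.1), Finsupp.coe_zero,
        Pi.zero_apply]

/-! ### proj -/

noncomputable def projHom (A : Finset ℕ) (p : ℕ) {k : ℕ} : ZChain k →ₗ[ℤ] ZChain k :=
  Finsupp.lsum ℤ fun s => LinearMap.toSpanSingleton ℤ _ (pSimp A p s)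

noncomputable def proj (A : Finset ℕ) (p : ℕ) {k : ℕ} (M : ZChain k) : ZChain k :=
  projHom A p M

lemma proj_eq_sum (A : Finset ℕ) (p : ℕ) {k : ℕ} (M : ZChain k) :
    proj A p M = ∑ s ∈ M.support, M s • pSimp A p s := by
  simp [proj, projHom, Finsupp.lsum_apply, Finsupp.sum, LinearMap.toSpanSingleton_apply]

lemma proj_single (A : Finset ℕ) (p : ℕ) {k : ℕ} (s : Simp k) (c : ℤ) :
    proj A p (Finsupp.single s c) = c • pSimp A p s := by
  simp [proj, projHom, Finsupp.lsum_apply, LinearMap.toSpanSingleton_apply,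
    Finsupp.sum_single_index]

lemma proj_fix {A : Finset ℕ} {p : ℕ} {k : ℕ} {X : GChain ℤ k} (hX : suppOn A X) :
    proj A p X = X := by
  rw [proj_eq_sum]
  have : ∀ s ∈ X.support, X s • pSimp A p s = Finsupp.single s (X s) := by
    intro s hs
    rw [pSimp_of_subset (hX s hs), Finsupp.smul_single, smul_eq_mul, mul_one]
  rw [Finset.sum_congr rfl this]
  exact Finsupp.sum_single X

lemma proj_support {A : Finset ℕ} {p : ℕ} {k : ℕ} (M : ZChain k) :
    ∀ t ∈ (proj A p M).support, ∃ s ∈ M.support,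
      (t:Finset ℕ) ⊆ insert p ((s:Finset ℕ) ∩ A) := by
  intro t ht
  rw [proj_eq_sum] at ht
  have := Finsupp.support_finset_sum (f := fun s => M s • pSimp A p s) ht
  rw [Finset.mem_biUnion] at this
  obtain ⟨s, hs, hmem⟩ := this
  refine ⟨s, hs, ?_⟩
  have hmem2 := Finsupp.support_smul hmem
  rw [pSimp] at hmem2
  split_ifs at hmem2 with h1 h2
  · have h2 := Finsupp.support_single_subset hmem2
    rw [Finset.mem_singleton] at h2
    rw [h2]
    intro x hx
    exact Finset.mem_insert.2 (Or.inr (Finset.mem_inter.2 ⟨hx, h1 hx⟩))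
  · have h2 := Finsupp.support_single_subset (Finsupp.support_smul hmem2)
    rw [Finset.mem_singleton] at h2
    rw [h2]
  · simp at hmem2

/-! ### set helpers -/

lemma bdry_zero {k : ℕ} : bdry (0 : ZChain (k+1)) = 0 := by
  rw [bdry_eq, map_zero]

lemma sdiff_facts {s A : Finset ℕ} {b : ℕ} (hb : s \ A = {b}) :
    b ∈ s ∧ b ∉ A := by
  have : b ∈ s \ A := by rw [hb]; exact Finset.mem_singleton_self b
  exact ⟨(Finset.mem_sdiff.1 this).1, (Finset.mem_sdiff.1 this).2⟩

lemma mem_A_of_ne {s A : Finset ℕ} {b : ℕ} (hb : s \ A = {b}) {w : ℕ}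
    (hw : w ∈ s) (hwb : w ≠ b) : w ∈ A := by
  by_contra hwA
  have : w ∈ s \ A := Finset.mem_sdiff.2 ⟨hw, hwA⟩
  rw [hb, Finset.mem_singleton] at this
  exact hwb this

lemma inter_eq_erase {s A : Finset ℕ} {b : ℕ} (hb : s \ A = {b}) :
    s ∩ A = s.erase b := by
  obtain ⟨hbs, hbA⟩ := sdiff_facts hb
  ext x
  simp only [Finset.mem_inter, Finset.mem_erase]
  constructor
  · rintro ⟨hxs, hxA⟩
    exact ⟨fun hxb => hbA (hxb ▸ hxA), hxs⟩
  · rintro ⟨hxb, hxs⟩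
    exact ⟨hxs, mem_A_of_ne hb hxs hxb⟩

lemma erase_sdiff_of_memA {s A : Finset ℕ} {w : ℕ} (hw : w ∈ A) :
    (s.erase w) \ A = s \ A := by
  ext x
  simp only [Finset.mem_sdiff, Finset.mem_erase]
  constructor
  · rintro ⟨⟨_, hxs⟩, hxA⟩; exact ⟨hxs, hxA⟩
  · rintro ⟨hxs, hxA⟩; exact ⟨⟨fun hxw => hxA (hxw ▸ hw), hxs⟩, hxA⟩

lemma erase_inter' (s A : Finset ℕ) (w : ℕ) : (s.erase w) ∩ A = (s ∩ A).erase w := by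
  ext x
  simp only [Finset.mem_inter, Finset.mem_erase]
  tauto

lemma erase_sdiff_self {s A : Finset ℕ} {w : ℕ} (hw : w ∉ A) :
    (s.erase w) \ A = (s \ A).erase w := by
  ext x
  simp only [Finset.mem_sdiff, Finset.mem_erase]
  tauto

lemma filter_lt_self_erase (U : Finset ℕ) (x : ℕ) :
    ((U.erase x).filter (· < x)).card = (U.filter (· < x)).card := by
  rw [Finset.filter_erase]
  rw [Finset.erase_eq_of_notMem (by simp)]

/-! ### plain-sum versions -/

lemma simpBdry_apply' {k : ℕ} (s : Simp (k+1)) (u : Simp k) :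
    (simpBdry ℤ s) u = ∑ v ∈ (s:Finset ℕ),
      (if (s:Finset ℕ).erase v = (u:Finset ℕ)
        then ((-1:ℤ)^(((s:Finset ℕ).filter (· < v)).card)) else 0) := by
  rw [simpBdry_apply]
  exact Finset.sum_attach ((s:Finset ℕ)) (fun v =>
      (if (s:Finset ℕ).erase v = (u:Finset ℕ)
        then ((-1:ℤ)^(((s:Finset ℕ).filter (· < v)).card)) else 0))

lemma proj_simpBdry_apply {A : Finset ℕ} {p : ℕ} (hpA : p ∈ A) {k : ℕ}
    (s : Simp (k+1)) (u : Simp k) :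
    (proj A p (simpBdry ℤ s)) u
      = ∑ w ∈ (s:Finset ℕ),
          (-1:ℤ)^(((s:Finset ℕ).filter (· < w)).card)
            * pCoe A p ((s:Finset ℕ).erase w) (u:Finset ℕ) := by
  rw [proj, simpBdry, map_sum (projHom A p) _ ((s:Finset ℕ).attach), Finsupp.finset_sum_apply]
  have step : ∀ v ∈ (s:Finset ℕ).attach,
      ((projHom A p) (((-1 : ℤ) ^ (((s : Finset ℕ).filter (· < (v:ℕ))).card)) •
        Finsupp.single (⟨(s : Finset ℕ).erase (v:ℕ), by
          have hv := v.2; simp [Finset.card_erase_of_mem hv, s.2]⟩ : Simp k) 1)) u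
      = (-1:ℤ)^(((s:Finset ℕ).filter (· < (v:ℕ))).card)
          * pCoe A p ((s:Finset ℕ).erase (v:ℕ)) (u:Finset ℕ) := by
    intro v _
    rw [map_smul, Finsupp.smul_apply, smul_eq_mul]
    congr 1
    have : (projHom A p) (Finsupp.single (⟨(s : Finset ℕ).erase (v:ℕ), by
          have hv := v.2; simp [Finset.card_erase_of_mem hv, s.2]⟩ : Simp k) 1)
        = pSimp A p (⟨(s : Finset ℕ).erase (v:ℕ), by
          have hv := v.2; simp [Finset.card_erase_of_mem hv, s.2]⟩ : Simp k) := by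
      rw [show (projHom A p) (Finsupp.single _ 1) = _ from Finsupp.lsum_single _ _ _ _]
      rw [LinearMap.toSpanSingleton_apply, one_smul]
    rw [this, pSimp_apply hpA]
  rw [Finset.sum_congr rfl step]
  exact Finset.sum_attach ((s:Finset ℕ)) (fun w => (-1:ℤ)^(((s:Finset ℕ).filter (· < w)).card)
            * pCoe A p ((s:Finset ℕ).erase w) (u:Finset ℕ))


theorem bdry_pSimp {A : Finset ℕ} {p : ℕ} (hpA : p ∈ A) {k : ℕ} (s : Simp (k+1)) :
    bdry (pSimp A p s) = proj A p (simpBdry ℤ s) := by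
  ext u
  rw [proj_simpBdry_apply hpA]
  by_cases hs : (s:Finset ℕ) ⊆ A
  · rw [pSimp_of_subset hs, bdry_single, one_smul, simpBdry_apply']
    apply Finset.sum_congr rfl
    intro w hw
    rw [pCoe, if_pos (Finset.Subset.trans (Finset.erase_subset w (s:Finset ℕ)) hs)]
    rw [mul_ite, mul_one, mul_zero]
  · by_cases h1 : ((s:Finset ℕ) \ A).card = 1
    · obtain ⟨b, hbset⟩ := Finset.card_eq_one.1 h1
      obtain ⟨hbS, hbA⟩ := sdiff_facts hbset
      have hpb : p ≠ b := fun hc => hbA (hc ▸ hpA)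
      by_cases hps : p ∈ (s:Finset ℕ)
      · -- case 3
        rw [pSimp_zero_of_mem hs hps, bdry_zero]
        rw [Finsupp.coe_zero, Pi.zero_apply]
        have hpS' : p ∈ (s:Finset ℕ).erase b := Finset.mem_erase.2 ⟨hpb, hps⟩
        rw [← Finset.add_sum_erase _ _ hbS, ← Finset.add_sum_erase _ _ hpS']
        have hrest : ∑ w ∈ (((s:Finset ℕ).erase b).erase p),
            (-1:ℤ)^(((s:Finset ℕ).filter (· < w)).card)
              * pCoe A p ((s:Finset ℕ).erase w) (u:Finset ℕ) = 0 := by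
          apply Finset.sum_eq_zero
          intro w hw
          have hwp : w ≠ p := (Finset.mem_erase.1 hw).1
          have hwb : w ≠ b := (Finset.mem_erase.1 (Finset.mem_of_mem_erase hw)).1
          have hwS : w ∈ (s:Finset ℕ) := Finset.mem_of_mem_erase (Finset.mem_of_mem_erase hw)
          rw [pCoe, if_neg, if_neg, mul_zero]
          · rintro ⟨-, hpT⟩
            exact hpT (Finset.mem_erase.2 ⟨Ne.symm hwp, hps⟩)
          · intro hsub
            exact hbA (hsub (Finset.mem_erase.2 ⟨Ne.symm hwb, hbS⟩))
        rw [hrest, add_zero]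
        have hTA : (s:Finset ℕ).erase b ⊆ A := by
          intro x hx
          exact mem_A_of_ne hbset (Finset.mem_of_mem_erase hx) ((Finset.mem_erase.1 hx).1)
        have hfb : pCoe A p ((s:Finset ℕ).erase b) (u:Finset ℕ)
            = if (s:Finset ℕ).erase b = (u:Finset ℕ) then 1 else 0 := by
          rw [pCoe, if_pos hTA]
        have hTdiff : ((s:Finset ℕ).erase p) \ A = {b} := by
          rw [erase_sdiff_of_memA hpA, hbset]
        have hbT : b ∈ (s:Finset ℕ).erase p := Finset.mem_erase.2 ⟨Ne.symm hpb, hbS⟩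
        have hTnsub : ¬ ((s:Finset ℕ).erase p ⊆ A) := fun hsub => hbA (hsub hbT)
        have hTinter : ((s:Finset ℕ).erase p) ∩ A = ((s:Finset ℕ).erase b).erase p := by
          rw [erase_inter', inter_eq_erase hbset]
        have hfp : pCoe A p ((s:Finset ℕ).erase p) (u:Finset ℕ)
            = if (s:Finset ℕ).erase b = (u:Finset ℕ)
              then psign A p ((s:Finset ℕ).erase p) else 0 := by
          rw [pCoe, if_neg hTnsub,
            if_pos ⟨by rw [hTdiff]; exact Finset.card_singleton b, Finset.notMem_erase p _⟩]
          rw [hTinter, Finset.insert_erase hpS']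
        rw [hfb, hfp]
        by_cases hU : (s:Finset ℕ).erase b = (u:Finset ℕ)
        · rw [if_pos hU, if_pos hU, mul_one]
          have e1 : (((s:Finset ℕ)).filter (· < b)).card
              = ((((s:Finset ℕ).erase p)).filter (· < b)).card + (if p < b then 1 else 0) :=
            card_filter_erase _ p b hps
          have e2 : (((s:Finset ℕ)).filter (· < p)).card
              = ((((s:Finset ℕ).erase b)).filter (· < p)).card + (if b < p then 1 else 0) :=
            card_filter_erase _ b p hbS
          have e3 : (((((s:Finset ℕ).erase p)) ∩ A).filter (· < p)).card
              = (((s:Finset ℕ).erase b).filter (· < p)).card := by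
            rw [hTinter, filter_lt_self_erase]
          have hc : (if p < b then 1 else 0) + (if b < p then 1 else 0) = 1 := by
            rcases Nat.lt_or_ge p b with h' | h'
            · rw [if_pos h', if_neg (by omega)]
            · have hbp : b < p := by
                rcases Nat.lt_or_ge b p with h'' | h''
                · exact h''
                · omega
              rw [if_neg (by omega), if_pos hbp]
          rw [psign, bOut_eq hTdiff, e3]
          rw [← pow_add]
          have h2 : ((-1:ℤ))^((((s:Finset ℕ)).filter (· < p)).card
              + (((((s:Finset ℕ).erase p)).filter (· < b)).card
                + (((s:Finset ℕ).erase b).filter (· < p)).card))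
              = ((-1:ℤ))^((((s:Finset ℕ)).filter (· < b)).card + 1) := by
            apply negpow
            omega
          rw [h2, pow_succ]
          ring
        · rw [if_neg hU, if_neg hU]
          ring
      · -- case 2
        rw [pSimp_of_one hs h1 hps hpA, Finsupp.smul_single, smul_eq_mul, mul_one,
          bdry_single, Finsupp.smul_apply, smul_eq_mul, simpBdry_apply']
        have hpSA : p ∉ (s:Finset ℕ) ∩ A := fun hc => hps (Finset.mem_of_mem_inter_left hc)
        have hcoe : ((⟨insert p ((s:Finset ℕ) ∩ A), card_insert_inter s.2 h1 hps⟩ :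
            Simp (k+1)) : Finset ℕ) = insert p ((s:Finset ℕ) ∩ A) := rfl
        rw [hcoe, Finset.mul_sum, Finset.sum_insert hpSA]
        rw [← Finset.add_sum_erase _ _ hbS,
          show (s:Finset ℕ).erase b = (s:Finset ℕ) ∩ A from (inter_eq_erase hbset).symm]
        congr 1
        · rw [Finset.erase_insert hpSA]
          have hfb : pCoe A p ((s:Finset ℕ) ∩ A) (u:Finset ℕ)
              = if (s:Finset ℕ) ∩ A = (u:Finset ℕ) then 1 else 0 := by
            rw [pCoe, if_pos Finset.inter_subset_right]
          rw [hfb, mul_ite, mul_ite, mul_one, mul_zero, mul_zero]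
          by_cases hU : (s:Finset ℕ) ∩ A = (u:Finset ℕ)
          · rw [if_pos hU, if_pos hU, psign, bOut_eq hbset]
            have e1 : (((insert p ((s:Finset ℕ) ∩ A))).filter (· < p)).card
                = (((s:Finset ℕ) ∩ A).filter (· < p)).card + (if p < p then 1 else 0) :=
              card_filter_insert _ p p hpSA
            rw [e1, ← pow_add]
            apply negpow
            have h0 : (if p < p then 1 else 0) = 0 := if_neg (lt_irrefl p)
            omega
          · rw [if_neg hU, if_neg hU]
        · apply Finset.sum_congr rfl
          intro w hw
          have hwS : w ∈ (s:Finset ℕ) := (Finset.mem_inter.1 hw).1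
          have hwA : w ∈ A := (Finset.mem_inter.1 hw).2
          have hwb : w ≠ b := fun hc => hbA (hc ▸ hwA)
          have hwp : w ≠ p := fun hc => hps (hc ▸ hwS)
          have hbT : b ∈ (s:Finset ℕ).erase w := Finset.mem_erase.2 ⟨Ne.symm hwb, hbS⟩
          have hTnsub : ¬ ((s:Finset ℕ).erase w ⊆ A) := fun hsub => hbA (hsub hbT)
          have hTdiff : ((s:Finset ℕ).erase w) \ A = {b} := by
            rw [erase_sdiff_of_memA hwA, hbset]
          have hTcard : (((s:Finset ℕ).erase w) \ A).card = 1 := by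
            rw [hTdiff]; exact Finset.card_singleton b
          have hpT : p ∉ (s:Finset ℕ).erase w := fun hc => hps (Finset.mem_of_mem_erase hc)
          have hfw : pCoe A p ((s:Finset ℕ).erase w) (u:Finset ℕ)
              = if insert p (((s:Finset ℕ).erase w) ∩ A) = (u:Finset ℕ)
                then psign A p ((s:Finset ℕ).erase w) else 0 := by
            rw [pCoe, if_neg hTnsub, if_pos ⟨hTcard, hpT⟩]
          rw [hfw]
          have hins : insert p (((s:Finset ℕ).erase w) ∩ A)
              = (insert p ((s:Finset ℕ) ∩ A)).erase w := by
            rw [erase_inter', ← Finset.erase_insert_of_ne (Ne.symm hwp)]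
          rw [hins]
          rw [mul_ite, mul_ite, mul_zero, mul_zero]
          by_cases hU : (insert p ((s:Finset ℕ) ∩ A)).erase w = (u:Finset ℕ)
          · rw [if_pos hU, if_pos hU, psign, psign, bOut_eq hbset, bOut_eq hTdiff]
            rw [← pow_add, ← pow_add]
            apply negpow
            have r1 : ((s:Finset ℕ).filter (· < w)).card
                = (((s:Finset ℕ) ∩ A).filter (· < w)).card + (if b < w then 1 else 0) := by
              rw [inter_eq_erase hbset]
              exact card_filter_erase _ b w hbS
            have r2 : ((s:Finset ℕ).filter (· < b)).card
                = (((s:Finset ℕ).erase w).filter (· < b)).card + (if w < b then 1 else 0) :=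
              card_filter_erase _ w b hwS
            have r3 : (((s:Finset ℕ) ∩ A).filter (· < p)).card
                = ((((s:Finset ℕ).erase w) ∩ A).filter (· < p)).card
                  + (if w < p then 1 else 0) := by
              rw [erase_inter']
              exact card_filter_erase _ w p hw
            have r4 : ((insert p ((s:Finset ℕ) ∩ A)).filter (· < w)).card
                = (((s:Finset ℕ) ∩ A).filter (· < w)).card + (if p < w then 1 else 0) :=
              card_filter_insert _ p w hpSA
            have d1 : (if b < w then 1 else 0) + (if w < b then 1 else 0) = 1 := by
              rcases Nat.lt_trichotomy b w with h' | h' | h'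
              · rw [if_pos h', if_neg (by omega)]
              · exact absurd h'.symm hwb
              · rw [if_neg (by omega), if_pos h']
            have d2 : (if p < w then 1 else 0) + (if w < p then 1 else 0) = 1 := by
              rcases Nat.lt_trichotomy p w with h' | h' | h'
              · rw [if_pos h', if_neg (by omega)]
              · exact absurd h'.symm hwp
              · rw [if_neg (by omega), if_pos h']
            omega
          · rw [if_neg hU, if_neg hU]
    · -- case 4
      rw [pSimp_zero_of_card hs h1, bdry_zero, Finsupp.coe_zero, Pi.zero_apply]
      have hne : ((s:Finset ℕ) \ A).Nonempty := Finset.sdiff_nonempty.2 hs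
      have hc2 : 2 ≤ ((s:Finset ℕ) \ A).card := by
        have := Finset.card_pos.2 hne
        omega
      have hzA : ∀ w ∈ (s:Finset ℕ), w ∈ A →
          pCoe A p ((s:Finset ℕ).erase w) (u:Finset ℕ) = 0 := by
        intro w hwS hwA
        have hTd : ((s:Finset ℕ).erase w) \ A = (s:Finset ℕ) \ A := erase_sdiff_of_memA hwA
        rw [pCoe, if_neg, if_neg]
        · rintro ⟨hc, -⟩
          rw [hTd] at hc
          omega
        · intro hsub
          obtain ⟨x, hx⟩ := hne
          have hxS : x ∈ (s:Finset ℕ) := (Finset.mem_sdiff.1 hx).1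
          have hxA : x ∉ A := (Finset.mem_sdiff.1 hx).2
          have hxw : x ≠ w := fun hc => hxA (hc ▸ hwA)
          exact hxA (hsub (Finset.mem_erase.2 ⟨hxw, hxS⟩))
      by_cases hc3 : 3 ≤ ((s:Finset ℕ) \ A).card
      · symm
        apply Finset.sum_eq_zero
        intro w hwS
        by_cases hwA : w ∈ A
        · rw [hzA w hwS hwA, mul_zero]
        · have hmem : w ∈ (s:Finset ℕ) \ A := Finset.mem_sdiff.2 ⟨hwS, hwA⟩
          have hcc := Finset.card_erase_of_mem hmem
          rw [pCoe, if_neg, if_neg, mul_zero]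
          · rintro ⟨hc, -⟩
            rw [erase_sdiff_self hwA] at hc
            omega
          · intro hsub
            have hnee : (((s:Finset ℕ) \ A).erase w).Nonempty := by
              rw [← Finset.card_pos]
              omega
            obtain ⟨x, hx⟩ := hnee
            have hxS : x ∈ (s:Finset ℕ) := (Finset.mem_sdiff.1 (Finset.mem_of_mem_erase hx)).1
            have hxA : x ∉ A := (Finset.mem_sdiff.1 (Finset.mem_of_mem_erase hx)).2
            have hxw : x ≠ w := (Finset.mem_erase.1 hx).1
            exact hxA (hsub (Finset.mem_erase.2 ⟨hxw, hxS⟩))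
      · have hc2' : ((s:Finset ℕ) \ A).card = 2 := by omega
        obtain ⟨b1, b2, hb12, hbset2⟩ := Finset.card_eq_two.1 hc2'
        have hb1 : b1 ∈ (s:Finset ℕ) ∧ b1 ∉ A := by
          have hx : b1 ∈ (s:Finset ℕ) \ A := by rw [hbset2]; simp
          exact ⟨(Finset.mem_sdiff.1 hx).1, (Finset.mem_sdiff.1 hx).2⟩
        have hb2 : b2 ∈ (s:Finset ℕ) ∧ b2 ∉ A := by
          have hx : b2 ∈ (s:Finset ℕ) \ A := by rw [hbset2]; simp
          exact ⟨(Finset.mem_sdiff.1 hx).1, (Finset.mem_sdiff.1 hx).2⟩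
        have hother : ∀ w ∈ (s:Finset ℕ), w ≠ b1 → w ≠ b2 → w ∈ A := by
          intro w hwS hw1 hw2
          by_contra hwA
          have hx : w ∈ (s:Finset ℕ) \ A := Finset.mem_sdiff.2 ⟨hwS, hwA⟩
          rw [hbset2] at hx
          simp only [Finset.mem_insert, Finset.mem_singleton] at hx
          tauto
        have hb2e : b2 ∈ ((s:Finset ℕ)).erase b1 :=
          Finset.mem_erase.2 ⟨Ne.symm hb12, hb2.1⟩
        rw [← Finset.add_sum_erase _ _ hb1.1, ← Finset.add_sum_erase _ _ hb2e]
        have hrest : ∑ w ∈ (((s:Finset ℕ).erase b1).erase b2),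
            (-1:ℤ)^(((s:Finset ℕ).filter (· < w)).card)
              * pCoe A p ((s:Finset ℕ).erase w) (u:Finset ℕ) = 0 := by
          apply Finset.sum_eq_zero
          intro w hw
          have hw2 : w ≠ b2 := (Finset.mem_erase.1 hw).1
          have hw1 : w ≠ b1 := (Finset.mem_erase.1 (Finset.mem_of_mem_erase hw)).1
          have hwS : w ∈ (s:Finset ℕ) := Finset.mem_of_mem_erase (Finset.mem_of_mem_erase hw)
          rw [hzA w hwS (hother w hwS hw1 hw2), mul_zero]
        rw [hrest, add_zero]
        have hT1d : ((s:Finset ℕ).erase b1) \ A = {b2} := by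
          rw [erase_sdiff_self hb1.2, hbset2]
          rw [show ({b1, b2} : Finset ℕ) = insert b1 {b2} from rfl,
            Finset.erase_insert (by simp [hb12])]
        have hT2d : ((s:Finset ℕ).erase b2) \ A = {b1} := by
          rw [erase_sdiff_self hb2.2, hbset2]
          rw [show ({b1, b2} : Finset ℕ) = insert b1 {b2} from rfl]
          ext x
          simp only [Finset.mem_erase, Finset.mem_insert, Finset.mem_singleton]
          constructor
          · rintro ⟨hx2, hx1 | hx2'⟩
            · exact hx1
            · exact absurd hx2' hx2
          · intro hx1
            exact ⟨fun hc => hb12 ((hx1 ▸ hc : b1 = b2).symm ▸ rfl), Or.inl hx1⟩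
        have hnsub1 : ¬ ((s:Finset ℕ).erase b1 ⊆ A) := fun hsub =>
          hb2.2 (hsub (Finset.mem_erase.2 ⟨Ne.symm hb12, hb2.1⟩))
        have hnsub2 : ¬ ((s:Finset ℕ).erase b2 ⊆ A) := fun hsub =>
          hb1.2 (hsub (Finset.mem_erase.2 ⟨hb12, hb1.1⟩))
        by_cases hpS : p ∈ (s:Finset ℕ)
        · have hz1 : pCoe A p ((s:Finset ℕ).erase b1) (u:Finset ℕ) = 0 := by
            rw [pCoe, if_neg hnsub1, if_neg]
            rintro ⟨-, hpT⟩
            exact hpT (Finset.mem_erase.2 ⟨fun hc => hb1.2 (hc ▸ hpA), hpS⟩)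
          have hz2 : pCoe A p ((s:Finset ℕ).erase b2) (u:Finset ℕ) = 0 := by
            rw [pCoe, if_neg hnsub2, if_neg]
            rintro ⟨-, hpT⟩
            exact hpT (Finset.mem_erase.2 ⟨fun hc => hb2.2 (hc ▸ hpA), hpS⟩)
          rw [hz1, hz2, mul_zero, mul_zero, add_zero]
        · have hi1 : ((s:Finset ℕ).erase b1) ∩ A = (s:Finset ℕ) ∩ A := by
            rw [erase_inter', Finset.erase_eq_of_notMem
              (fun hc => hb1.2 (Finset.mem_of_mem_inter_right hc))]
          have hi2 : ((s:Finset ℕ).erase b2) ∩ A = (s:Finset ℕ) ∩ A := by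
            rw [erase_inter', Finset.erase_eq_of_notMem
              (fun hc => hb2.2 (Finset.mem_of_mem_inter_right hc))]
          have hf1 : pCoe A p ((s:Finset ℕ).erase b1) (u:Finset ℕ)
              = if insert p ((s:Finset ℕ) ∩ A) = (u:Finset ℕ)
                then psign A p ((s:Finset ℕ).erase b1) else 0 := by
            rw [pCoe, if_neg hnsub1, if_pos ⟨by rw [hT1d]; exact Finset.card_singleton b2,
              fun hc => hpS (Finset.mem_of_mem_erase hc)⟩, hi1]
          have hf2 : pCoe A p ((s:Finset ℕ).erase b2) (u:Finset ℕ)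
              = if insert p ((s:Finset ℕ) ∩ A) = (u:Finset ℕ)
                then psign A p ((s:Finset ℕ).erase b2) else 0 := by
            rw [pCoe, if_neg hnsub2, if_pos ⟨by rw [hT2d]; exact Finset.card_singleton b1,
              fun hc => hpS (Finset.mem_of_mem_erase hc)⟩, hi2]
          rw [hf1, hf2]
          by_cases hU : insert p ((s:Finset ℕ) ∩ A) = (u:Finset ℕ)
          · rw [if_pos hU, if_pos hU, psign, psign, bOut_eq hT1d, bOut_eq hT2d, hi1, hi2]
            rw [← pow_add, ← pow_add]
            have r1 : ((s:Finset ℕ).filter (· < b2)).card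
                = (((s:Finset ℕ).erase b1).filter (· < b2)).card
                  + (if b1 < b2 then 1 else 0) :=
              card_filter_erase _ b1 b2 hb1.1
            have r2 : ((s:Finset ℕ).filter (· < b1)).card
                = (((s:Finset ℕ).erase b2).filter (· < b1)).card
                  + (if b2 < b1 then 1 else 0) :=
              card_filter_erase _ b2 b1 hb2.1
            have d : (if b1 < b2 then 1 else 0) + (if b2 < b1 then 1 else 0) = 1 := by
              rcases Nat.lt_trichotomy b1 b2 with h' | h' | h'
              · rw [if_pos h', if_neg (by omega)]
              · exact absurd h' hb12
              · rw [if_neg (by omega), if_pos h']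
            have h2 : ((-1:ℤ))^(((s:Finset ℕ).filter (· < b1)).card
                + ((((s:Finset ℕ).erase b1).filter (· < b2)).card
                  + (((s:Finset ℕ) ∩ A).filter (· < p)).card))
                = ((-1:ℤ))^((((s:Finset ℕ).filter (· < b2)).card
                + ((((s:Finset ℕ).erase b2).filter (· < b1)).card
                  + (((s:Finset ℕ) ∩ A).filter (· < p)).card)) + 1) := negpow (by omega)
            rw [h2, pow_succ]
            ring
          · rw [if_neg hU, if_neg hU]
            ring

/-! ### chain map, cycle vanishing, survival bounds -/

theorem proj_bdry {A : Finset ℕ} {p : ℕ} (hpA : p ∈ A) {k : ℕ} (M : ZChain (k+1)) :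
    bdry (proj A p M) = proj A p (bdry M) := by
  rw [proj_eq_sum, bdry_finset_sum]
  have h2 : bdry M = ∑ s ∈ M.support, M s • simpBdry ℤ s := rfl
  rw [h2, show proj A p (∑ s ∈ M.support, M s • simpBdry ℤ s)
      = ∑ s ∈ M.support, proj A p (M s • simpBdry ℤ s) from
    map_sum (projHom A p) _ _]
  apply Finset.sum_congr rfl
  intro s _
  rw [bdry_smul, bdry_pSimp hpA]
  exact (map_smul (projHom A p) _ _).symm

lemma proj_zero (A : Finset ℕ) (p : ℕ) {k : ℕ} : proj A p (0 : ZChain k) = 0 :=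
  map_zero (projHom A p)

lemma proj_cycle_zero {A B : Finset ℕ} {p : ℕ} (hpA : p ∈ A) {k : ℕ}
    (Y : ZChain (k+1)) (hYc : bdry Y = 0) (hY : suppOn B Y)
    (hsmall : (insert p (A ∩ B)).card ≤ k + 2) : proj A p Y = 0 := by
  apply small_cycle_zero _ (by rw [proj_bdry hpA, hYc, proj_zero])
    (insert p (A ∩ B)) hsmall
  intro t ht
  obtain ⟨s, hsY, hsub⟩ := proj_support Y t ht
  refine Finset.Subset.trans hsub ?_
  intro x hx
  rcases Finset.mem_insert.1 hx with hxp | hxm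
  · exact Finset.mem_insert.2 (Or.inl hxp)
  · refine Finset.mem_insert.2 (Or.inr ?_)
    exact Finset.mem_inter.2 ⟨Finset.mem_of_mem_inter_right hxm,
      hY s hsY (Finset.mem_of_mem_inter_left hxm)⟩

lemma znorm_pSimp_le (A : Finset ℕ) (p : ℕ) {k : ℕ} (s : Simp k) :
    znorm (pSimp A p s) ≤ 1 := by
  rw [pSimp]
  split_ifs with h1 h2
  · rw [znorm_single]; rfl
  · rw [Finsupp.smul_single, smul_eq_mul, mul_one, znorm_single, psign]
    rw [Int.natAbs_pow]
    simp
  · rw [znorm_zero]; omega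

lemma pSimp_survive {A : Finset ℕ} {p : ℕ} {k : ℕ} {s : Simp k}
    (h : pSimp A p s ≠ 0) :
    (s:Finset ℕ) ⊆ A ∨ (((s:Finset ℕ) \ A).card = 1 ∧ p ∉ (s:Finset ℕ)) := by
  by_cases hsA : (s:Finset ℕ) ⊆ A
  · exact Or.inl hsA
  · right
    by_cases hc : ((s:Finset ℕ) \ A).card = 1
    · refine ⟨hc, fun hps => h (pSimp_zero_of_mem hsA hps)⟩
    · exact absurd (pSimp_zero_of_card hsA hc) h

lemma survival_bound {n : ℕ} (A B : Finset ℕ) (h : (A ∩ B).card ≤ n + 2)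
    (p q : ℕ)
    (hq1 : (insert q (A ∩ B)).card ≤ n + 2)
    (hp1 : (insert p (A ∩ B)).card ≤ n + 2)
    (h3 : ∀ t : Finset ℕ, t.card = n + 3 → (t \ A).card = 1 → (t \ B).card = 1 →
      p ∈ t ∨ q ∈ t)
    (s : Simp (n+2)) :
    znorm (pSimp A p s) + znorm (pSimp B q s) ≤ 1 := by
  have hcard : (s:Finset ℕ).card = n + 3 := s.2
  -- helper for the symmetric claim
  have key : ∀ (A' B' : Finset ℕ) (r : ℕ), A' ∩ B' = A ∩ B →
      (insert r (A' ∩ B')).card ≤ n + 2 →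
      (s:Finset ℕ) ⊆ A' → pSimp B' r s = 0 := by
    intro A' B' r hC hr1 hsA
    have hnsub : ¬ ((s:Finset ℕ) ⊆ B') := by
      intro hsub
      have : (s:Finset ℕ) ⊆ A' ∩ B' := Finset.subset_inter hsA hsub
      have := Finset.card_le_card this
      rw [hC] at this
      omega
    by_cases hcB : ((s:Finset ℕ) \ B').card = 1
    · -- s ∩ B' has n+2 elements, contained in A' ∩ B'
      have hic : ((s:Finset ℕ) ∩ B').card = n + 2 := by
        have := Finset.card_inter_add_card_sdiff (s:Finset ℕ) B'
        omega
      have hsubC : (s:Finset ℕ) ∩ B' ⊆ A' ∩ B' := by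
        intro x hx
        exact Finset.mem_inter.2 ⟨hsA (Finset.mem_of_mem_inter_left hx),
          Finset.mem_of_mem_inter_right hx⟩
      have hCcard : (A' ∩ B').card = n + 2 := by
        have h1 := Finset.card_le_card hsubC
        rw [hC] at *
        omega
      have hCeq : (s:Finset ℕ) ∩ B' = A' ∩ B' :=
        Finset.eq_of_subset_of_card_le hsubC (by omega)
      have hrC : r ∈ A' ∩ B' := by
        by_contra hrc
        rw [Finset.card_insert_of_notMem hrc] at hr1
        omega
      have hrs : r ∈ (s:Finset ℕ) := by
        rw [← hCeq] at hrC
        exact Finset.mem_of_mem_inter_left hrC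
      exact pSimp_zero_of_mem hnsub hrs
    · exact pSimp_zero_of_card hnsub hcB
  by_cases hsA : (s:Finset ℕ) ⊆ A
  · rw [key A B q rfl hq1 hsA, znorm_zero]
    exact le_trans (by omega) (znorm_pSimp_le A p s)
  · by_cases hsB : (s:Finset ℕ) ⊆ B
    · rw [key B A p (Finset.inter_comm B A) (by rw [Finset.inter_comm B A]; exact hp1) hsB,
        znorm_zero]
      exact le_trans (by omega) (znorm_pSimp_le B q s)
    · by_cases hz1 : pSimp A p s = 0
      · rw [hz1, znorm_zero]
        exact le_trans (by omega) (znorm_pSimp_le B q s)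
      · by_cases hz2 : pSimp B q s = 0
        · rw [hz2, znorm_zero]
          exact le_trans (by omega) (znorm_pSimp_le A p s)
        · exfalso
          rcases pSimp_survive hz1 with h' | ⟨hca, hpa⟩
          · exact hsA h'
          rcases pSimp_survive hz2 with h' | ⟨hcb, hqb⟩
          · exact hsB h'
          rcases h3 (s:Finset ℕ) hcard hca hcb with h' | h'
          · exact hpa h'
          · exact hqb h'

lemma exclusion {n : ℕ} (A B : Finset ℕ) (h : (A ∩ B).card ≤ n + 2)
    (X Y : ZChain (n + 1)) (hXc : bdry X = 0) (hYc : bdry Y = 0)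
    (hX : suppOn A X) (hY : suppOn B Y)
    (M : ZChain (n + 2)) (hM : Taut M) (hbd : bdry M = X + Y)
    (p q : ℕ) (hpA : p ∈ A) (hqB : q ∈ B)
    (hp1 : (insert p (A ∩ B)).card ≤ n + 2)
    (hq1 : (insert q (A ∩ B)).card ≤ n + 2)
    (h3 : ∀ t : Finset ℕ, t.card = n + 3 → (t \ A).card = 1 → (t \ B).card = 1 →
      p ∈ t ∨ q ∈ t)
    (s0 : Simp (n+2)) (hd1 : pSimp A p s0 = 0) (hd2 : pSimp B q s0 = 0) :
    M s0 = 0 := by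
  by_contra hMs0
  have hs0 : s0 ∈ M.support := Finsupp.mem_support_iff.2 hMs0
  have hq1' : (insert q (B ∩ A)).card ≤ n + 2 := by
    rw [Finset.inter_comm B A]; exact hq1
  set N : ZChain (n+2) := proj A p M + proj B q M with hN
  have hNbd : bdry N = X + Y := by
    rw [hN, bdry_add, proj_bdry hpA, proj_bdry hqB, hbd]
    have e1 : proj A p (X + Y) = X := by
      rw [show proj A p (X+Y) = proj A p X + proj A p Y from map_add (projHom A p) X Y,
        proj_fix hX, proj_cycle_zero hpA Y hYc hY hp1, add_zero]
    have e2 : proj B q (X + Y) = Y := by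
      rw [show proj B q (X+Y) = proj B q X + proj B q Y from map_add (projHom B q) X Y,
        proj_fix hY, proj_cycle_zero hqB X hXc hX hq1', zero_add]
    rw [e1, e2]
  have hle1 : znorm M ≤ znorm N := by
    rw [Taut, hbd] at hM
    rw [hM]
    exact zvol_le _ N hNbd
  have hNsum : N = ∑ s ∈ M.support, (M s • pSimp A p s + M s • pSimp B q s) := by
    rw [hN, proj_eq_sum, proj_eq_sum, ← Finset.sum_add_distrib]
  have hup : znorm N ≤ ∑ s ∈ M.support, znorm (M s • pSimp A p s + M s • pSimp B q s) := by
    rw [hNsum]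
    exact znorm_finset_sum_le _ _
  have hterm : ∀ s : Simp (n+2), znorm (M s • pSimp A p s + M s • pSimp B q s)
      ≤ (M s).natAbs := by
    intro s
    refine le_trans (znorm_add_le _ _) ?_
    rw [znorm_smul, znorm_smul, ← Nat.mul_add]
    calc (M s).natAbs * (znorm (pSimp A p s) + znorm (pSimp B q s))
        ≤ (M s).natAbs * 1 :=
          Nat.mul_le_mul_left _ (survival_bound A B h p q hq1 hp1 h3 s)
      _ = (M s).natAbs := Nat.mul_one _
  have hterm0 : znorm (M s0 • pSimp A p s0 + M s0 • pSimp B q s0) = 0 := by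
    rw [hd1, hd2, smul_zero, add_zero, znorm_zero]
  have hsplit1 : ∑ s ∈ M.support, znorm (M s • pSimp A p s + M s • pSimp B q s)
      = znorm (M s0 • pSimp A p s0 + M s0 • pSimp B q s0)
        + ∑ s ∈ M.support.erase s0, znorm (M s • pSimp A p s + M s • pSimp B q s) :=
    (Finset.add_sum_erase _ _ hs0).symm
  have hsplit2 : znorm M = (M s0).natAbs + ∑ s ∈ M.support.erase s0, (M s).natAbs := by
    rw [znorm_eq_sum_of M M.support le_rfl]
    exact (Finset.add_sum_erase _ _ hs0).symm
  have hsum_le : ∑ s ∈ M.support.erase s0, znorm (M s • pSimp A p s + M s • pSimp B q s)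
      ≤ ∑ s ∈ M.support.erase s0, (M s).natAbs :=
    Finset.sum_le_sum (fun s _ => hterm s)
  have hpos : (M s0).natAbs ≠ 0 := Int.natAbs_ne_zero.2 hMs0
  omega

lemma cover_card (t A B : Finset ℕ) :
    t.card ≤ (t ∩ (A ∩ B)).card + ((t \ A).card + (t \ B).card) := by
  have hcover : t ⊆ (t ∩ (A ∩ B)) ∪ ((t \ A) ∪ (t \ B)) := by
    intro x hx
    by_cases hxA : x ∈ A
    · by_cases hxB : x ∈ B
      · exact Finset.mem_union.2 (Or.inl (by simp [hx, hxA, hxB]))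
      · exact Finset.mem_union.2 (Or.inr (Finset.mem_union.2 (Or.inr (by simp [hx, hxB]))))
    · exact Finset.mem_union.2 (Or.inr (Finset.mem_union.2 (Or.inl (by simp [hx, hxA]))))
  have h1 := Finset.card_le_card hcover
  have h2 := Finset.card_union_le (t ∩ (A ∩ B)) ((t \ A) ∪ (t \ B))
  have h3 := Finset.card_union_le (t \ A) (t \ B)
  omega

lemma h3_of {n : ℕ} (hn : 1 ≤ n) (A B : Finset ℕ) (h : (A ∩ B).card ≤ n + 2)
    (p q : ℕ)
    (hcase : (p ∈ A ∩ B ∧ q ∈ A ∩ B ∧ p ≠ q) ∨ (A ∩ B).card ≤ 1) :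
    ∀ t : Finset ℕ, t.card = n + 3 → (t \ A).card = 1 → (t \ B).card = 1 →
      p ∈ t ∨ q ∈ t := by
  intro t htc hta htb
  have hbig : n + 1 ≤ (t ∩ (A ∩ B)).card := by
    have := cover_card t A B
    omega
  have hsub : t ∩ (A ∩ B) ⊆ A ∩ B := Finset.inter_subset_right
  rcases hcase with ⟨hpC, hqC, hpq⟩ | hsmallC
  · by_contra hcon
    push_neg at hcon
    have hsub2 : t ∩ (A ∩ B) ⊆ ((A ∩ B).erase p).erase q := by
      intro x hx
      have hxC : x ∈ A ∩ B := (Finset.mem_inter.1 hx).2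
      have hxt : x ∈ t := (Finset.mem_inter.1 hx).1
      exact Finset.mem_erase.2 ⟨fun hc => hcon.2 (hc ▸ hxt),
        Finset.mem_erase.2 ⟨fun hc => hcon.1 (hc ▸ hxt), hxC⟩⟩
    have hc2 : (((A ∩ B).erase p).erase q).card = (A ∩ B).card - 2 := by
      rw [Finset.card_erase_of_mem (Finset.mem_erase.2 ⟨Ne.symm hpq, hqC⟩),
        Finset.card_erase_of_mem hpC]
      omega
    have := Finset.card_le_card hsub2
    omega
  · have := Finset.card_le_card hsub
    omega

lemma classify {n : ℕ} (hn : 1 ≤ n) (A B : Finset ℕ) (h : (A ∩ B).card ≤ n + 2)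
    (hAne : A.Nonempty) (hBne : B.Nonempty)
    (X Y : ZChain (n + 1)) (hXc : bdry X = 0) (hYc : bdry Y = 0)
    (hX : suppOn A X) (hY : suppOn B Y)
    (M : ZChain (n + 2)) (hM : Taut M) (hbd : bdry M = X + Y)
    (s0 : Simp (n+2)) (hs0 : M s0 ≠ 0) :
    ((s0:Finset ℕ) ⊆ A) ∨ ((s0:Finset ℕ) ⊆ B) ∨
    (((s0:Finset ℕ) \ A).card = 1 ∧ (s0:Finset ℕ) ∩ (A ∩ B) = ∅) ∨
    (((s0:Finset ℕ) \ B).card = 1 ∧ (s0:Finset ℕ) ∩ (A ∩ B) = ∅) := by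
  by_contra hcon
  push_neg at hcon
  obtain ⟨hnA, hnB, hnI, hnII⟩ := hcon
  apply hs0
  have hcard : (s0:Finset ℕ).card = n + 3 := s0.2
  have excl : ∀ p q : ℕ, p ∈ A → q ∈ B →
      (insert p (A ∩ B)).card ≤ n + 2 → (insert q (A ∩ B)).card ≤ n + 2 →
      ((p ∈ A ∩ B ∧ q ∈ A ∩ B ∧ p ≠ q) ∨ (A ∩ B).card ≤ 1) →
      pSimp A p s0 = 0 → pSimp B q s0 = 0 → M s0 = 0 := by
    intro p q hpA hqB hp1 hq1 hcase hd1 hd2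
    exact exclusion A B h X Y hXc hYc hX hY M hM hbd p q hpA hqB hp1 hq1
      (h3_of hn A B h p q hcase) s0 hd1 hd2
  have hCcard1 : ∀ r ∈ A ∩ B, (insert r (A ∩ B)).card ≤ n + 2 := by
    intro r hr
    rw [Finset.insert_eq_self.2 hr]
    exact h
  have hCsmall : ∀ r : ℕ, (A ∩ B).card ≤ 1 → (insert r (A ∩ B)).card ≤ n + 2 := by
    intro r hc
    have := Finset.card_insert_le r (A ∩ B)
    omega
  by_cases ha1 : ((s0:Finset ℕ) \ A).card = 1
  · have hCne : ((s0:Finset ℕ) ∩ (A ∩ B)).Nonempty :=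
      hnI ha1
    obtain ⟨p, hp⟩ := hCne
    have hpC : p ∈ A ∩ B := (Finset.mem_inter.1 hp).2
    have hps : p ∈ (s0:Finset ℕ) := (Finset.mem_inter.1 hp).1
    have hpA : p ∈ A := (Finset.mem_inter.1 hpC).1
    have hd1 : pSimp A p s0 = 0 := pSimp_zero_of_mem hnA hps
    by_cases hb1 : ((s0:Finset ℕ) \ B).card = 1
    · have hbig : n + 1 ≤ ((s0:Finset ℕ) ∩ (A ∩ B)).card := by
        have := cover_card (s0:Finset ℕ) A B
        omega
      have hqne : (((s0:Finset ℕ) ∩ (A ∩ B)).erase p).Nonempty := by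
        rw [← Finset.card_pos, Finset.card_erase_of_mem hp]
        omega
      obtain ⟨q, hq⟩ := hqne
      have hqp : q ≠ p := (Finset.mem_erase.1 hq).1
      have hq' : q ∈ (s0:Finset ℕ) ∩ (A ∩ B) := Finset.mem_of_mem_erase hq
      have hqC : q ∈ A ∩ B := (Finset.mem_inter.1 hq').2
      have hqs : q ∈ (s0:Finset ℕ) := (Finset.mem_inter.1 hq').1
      exact excl p q hpA (Finset.mem_inter.1 hqC).2 (hCcard1 p hpC) (hCcard1 q hqC)
        (Or.inl ⟨hpC, hqC, Ne.symm hqp⟩) hd1 (pSimp_zero_of_mem hnB hqs)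
    · by_cases hCp : ((A ∩ B).erase p).Nonempty
      · obtain ⟨q, hq⟩ := hCp
        have hqC : q ∈ A ∩ B := Finset.mem_of_mem_erase hq
        exact excl p q hpA (Finset.mem_inter.1 hqC).2 (hCcard1 p hpC) (hCcard1 q hqC)
          (Or.inl ⟨hpC, hqC, Ne.symm (Finset.mem_erase.1 hq).1⟩) hd1
          (pSimp_zero_of_card hnB hb1)
      · have hCsm : (A ∩ B).card ≤ 1 := by
          have h1 : (A ∩ B).erase p = ∅ := Finset.not_nonempty_iff_eq_empty.1 hCp
          have h2 := Finset.card_erase_of_mem hpC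
          rw [h1] at h2
          simp only [Finset.card_empty] at h2
          omega
        obtain ⟨q, hqB⟩ := hBne
        exact excl p q hpA hqB (hCcard1 p hpC) (hCsmall q hCsm) (Or.inr hCsm) hd1
          (pSimp_zero_of_card hnB hb1)
  · have hd1 : ∀ p, pSimp A p s0 = 0 := fun p => pSimp_zero_of_card hnA ha1
    by_cases hb1 : ((s0:Finset ℕ) \ B).card = 1
    · have hCne : ((s0:Finset ℕ) ∩ (A ∩ B)).Nonempty :=
        hnII hb1
      obtain ⟨q, hq⟩ := hCne
      have hqC : q ∈ A ∩ B := (Finset.mem_inter.1 hq).2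
      have hqs : q ∈ (s0:Finset ℕ) := (Finset.mem_inter.1 hq).1
      have hd2 : pSimp B q s0 = 0 := pSimp_zero_of_mem hnB hqs
      by_cases hCq : ((A ∩ B).erase q).Nonempty
      · obtain ⟨p, hp⟩ := hCq
        have hpC : p ∈ A ∩ B := Finset.mem_of_mem_erase hp
        exact excl p q (Finset.mem_inter.1 hpC).1 (Finset.mem_inter.1 hqC).2
          (hCcard1 p hpC) (hCcard1 q hqC)
          (Or.inl ⟨hpC, hqC, (Finset.mem_erase.1 hp).1⟩) (hd1 p) hd2
      · have hCsm : (A ∩ B).card ≤ 1 := by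
          have h1 : (A ∩ B).erase q = ∅ := Finset.not_nonempty_iff_eq_empty.1 hCq
          have h2 := Finset.card_erase_of_mem hqC
          rw [h1] at h2
          simp only [Finset.card_empty] at h2
          omega
        obtain ⟨p, hpA⟩ := hAne
        exact excl p q hpA (Finset.mem_inter.1 hqC).2 (hCsmall p hCsm) (hCcard1 q hqC)
          (Or.inr hCsm) (hd1 p) hd2
    · have hd2 : ∀ q, pSimp B q s0 = 0 := fun q => pSimp_zero_of_card hnB hb1
      by_cases hC2 : 2 ≤ (A ∩ B).card
      · have hCne : (A ∩ B).Nonempty := Finset.card_pos.1 (by omega)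
        obtain ⟨p, hpC⟩ := hCne
        have hCp : ((A ∩ B).erase p).Nonempty := by
          rw [← Finset.card_pos, Finset.card_erase_of_mem hpC]
          omega
        obtain ⟨q, hq⟩ := hCp
        have hqC : q ∈ A ∩ B := Finset.mem_of_mem_erase hq
        exact excl p q (Finset.mem_inter.1 hpC).1 (Finset.mem_inter.1 hqC).2
          (hCcard1 p hpC) (hCcard1 q hqC)
          (Or.inl ⟨hpC, hqC, Ne.symm (Finset.mem_erase.1 hq).1⟩) (hd1 p) (hd2 q)
      · obtain ⟨p, hpA⟩ := hAne
        obtain ⟨q, hqB⟩ := hBne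
        have hCsm : (A ∩ B).card ≤ 1 := by omega
        exact excl p q hpA hqB (hCsmall p hCsm) (hCsmall q hCsm) (Or.inr hCsm)
          (hd1 p) (hd2 q)

/-! ### decomposition -/

lemma znorm_filter_add_not {k : ℕ} (M : ZChain k) (P : Simp k → Prop) [DecidablePred P] :
    znorm (M.filter P) + znorm (M.filter (fun s => ¬ P s)) = znorm M := by
  classical
  have h1 : znorm (M.filter P) = ∑ t ∈ M.support.filter P, (M t).natAbs := by
    rw [znorm_eq_sum_of (M.filter P) (M.support.filter P)
      (by rw [Finsupp.support_filter])]
    apply Finset.sum_congr rfl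
    intro t ht
    rw [Finsupp.filter_apply_pos _ _ (Finset.mem_filter.1 ht).2]
  have h2 : znorm (M.filter (fun s => ¬ P s))
      = ∑ t ∈ M.support.filter (fun s => ¬ P s), (M t).natAbs := by
    rw [znorm_eq_sum_of (M.filter (fun s => ¬ P s)) (M.support.filter (fun s => ¬ P s))
      (by rw [Finsupp.support_filter])]
    apply Finset.sum_congr rfl
    intro t ht
    rw [Finsupp.filter_apply_pos (fun s => ¬ P s) M (Finset.mem_filter.1 ht).2]
  rw [h1, h2, Finset.sum_filter_add_sum_filter_not, znorm_eq_sum_of M M.support le_rfl]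

lemma zvol_zero {k : ℕ} : zvol (0 : ZChain k) = 0 := by
  have h0 : (0:ℕ) ∈ {m : ℕ | ∃ W : ZChain (k+1), bdry W = 0 ∧ znorm W = m} :=
    ⟨0, bdry_zero, znorm_zero⟩
  exact Nat.eq_zero_of_le_zero (Nat.sInf_le h0)

lemma taut_zero {k : ℕ} : Taut (0 : ZChain (k+1)) := by
  rw [Taut, bdry_zero, znorm_zero, zvol_zero]

lemma taut_pair {n : ℕ} (M MX MY : ZChain (n+2)) (X Y : ZChain (n+1))
    (hMX : bdry MX = X) (hMY : bdry MY = Y) (hM : Taut M) (hbd : bdry M = X + Y)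
    (hsum : znorm M = znorm MX + znorm MY) : Taut MX ∧ Taut MY := by
  have h1 : zvol X ≤ znorm MX := zvol_le X MX hMX
  have h2 : zvol Y ≤ znorm MY := zvol_le Y MY hMY
  obtain ⟨VX, hVX, hVXn⟩ := zvol_exists X MX hMX
  obtain ⟨VY, hVY, hVYn⟩ := zvol_exists Y MY hMY
  have h3 : znorm M ≤ zvol X + zvol Y := by
    rw [Taut, hbd] at hM
    rw [hM]
    refine le_trans (zvol_le _ (VX + VY) (by rw [bdry_add, hVX, hVY])) ?_
    rw [← hVXn, ← hVYn]
    exact znorm_add_le VX VY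
  constructor
  · rw [Taut, hMX]; omega
  · rw [Taut, hMY]; omega

end TS

/-- for cycles of dimension `≥ 2`, taut fillings split under
almost disjoint union.  (The cycles `X, Y` have dimension `n + 1`, so the
hypothesis `1 ≤ n` says the dimension is at least `2`.) -/
theorem taut_splits_of_almost_disjoint {n : ℕ} (hn : 1 ≤ n) (A B : Finset ℕ)
    (h : (A ∩ B).card ≤ n + 2)
    (X Y : ZChain (n + 1)) (hXc : bdry X = 0) (hYc : bdry Y = 0)
    (hX : suppOn A X) (hY : suppOn B Y)
    (M : ZChain (n + 2)) (hM : Taut M) (hbd : bdry M = X + Y) :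
    ∃ MX MY : ZChain (n + 2), M = MX + MY ∧ bdry MX = X ∧ bdry MY = Y ∧
      znorm M = znorm MX + znorm MY ∧ Taut MX ∧ Taut MY := by
  classical
  open TS in
  by_cases hX0 : X = 0
  · refine ⟨0, M, (zero_add M).symm, TS.bdry_zero.trans hX0.symm, ?_, ?_, TS.taut_zero, hM⟩
    · rw [hbd, hX0, zero_add]
    · rw [TS.znorm_zero, zero_add]
  · by_cases hY0 : Y = 0
    · refine ⟨M, 0, (add_zero M).symm, ?_, TS.bdry_zero.trans hY0.symm, ?_, hM, TS.taut_zero⟩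
      · rw [hbd, hY0, add_zero]
      · rw [TS.znorm_zero, add_zero]
    · -- main case
      have hAne : A.Nonempty := by
        obtain ⟨t, ht⟩ := Finsupp.support_nonempty_iff.2 hX0
        have h1 : (t:Finset ℕ).Nonempty := Finset.card_pos.1 (by rw [t.2]; omega)
        obtain ⟨x, hx⟩ := h1
        exact ⟨x, hX t ht hx⟩
      have hBne : B.Nonempty := by
        obtain ⟨t, ht⟩ := Finsupp.support_nonempty_iff.2 hY0
        have h1 : (t:Finset ℕ).Nonempty := Finset.card_pos.1 (by rw [t.2]; omega)
        obtain ⟨x, hx⟩ := h1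
        exact ⟨x, hY t ht hx⟩
      set P : Simp (n + 2) → Prop := fun s =>
        (s:Finset ℕ) ⊆ A ∨ (((s:Finset ℕ) \ A).card = 1 ∧ (s:Finset ℕ) ∩ (A ∩ B) = ∅)
        with hP
      set MX : ZChain (n+2) := M.filter P with hMX
      set MY : ZChain (n+2) := M.filter (fun s => ¬ P s) with hMY
      have hMsum : MX + MY = M := Finsupp.filter_pos_add_filter_neg M P
      have hclass : ∀ s ∈ M.support, ¬ P s →
          ((s:Finset ℕ) ⊆ B ∨ (((s:Finset ℕ) \ B).card = 1
            ∧ (s:Finset ℕ) ∩ (A ∩ B) = ∅)) := by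
        intro s hs hnP
        have hMs : M s ≠ 0 := Finsupp.mem_support_iff.1 hs
        rcases TS.classify hn A B h hAne hBne X Y hXc hYc hX hY M hM hbd s hMs with
          h1 | h1 | h1 | h1
        · exact absurd (Or.inl h1) hnP
        · exact Or.inl h1
        · exact absurd (Or.inr h1) hnP
        · exact Or.inr h1
      -- the boundary defect
      set D : ZChain (n+1) := bdry MX - X with hD
      have hbsum : bdry MX + bdry MY = X + Y := by
        rw [← TS.bdry_add, hMsum, hbd]
      have hD2 : D = Y - bdry MY := by
        rw [hD]
        have : bdry MX = X + Y - bdry MY := by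
          rw [← hbsum]; abel
        rw [this]; abel
      have hfaces1 : ∀ u ∈ D.support, (u:Finset ℕ) ⊆ A ∨
          (((u:Finset ℕ) \ A).card = 1 ∧ (u:Finset ℕ) ∩ (A ∩ B) = ∅) := by
        intro u hu
        have := Finsupp.support_sub (f := bdry MX) (g := X) hu
        rcases Finset.mem_union.1 this with h1 | h1
        · obtain ⟨s, hsMX, husub⟩ := TS.bdry_support_subset MX u h1
          have hsP : P s := by
            have := Finsupp.support_filter (p := P) (f := M) ▸ hsMX
            exact (Finset.mem_filter.1 this).2
          rcases hsP with hsA | ⟨hs1, hsC⟩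
          · exact Or.inl (husub.trans hsA)
          · have hsd : ((u:Finset ℕ) \ A) ⊆ ((s:Finset ℕ) \ A) :=
              Finset.sdiff_subset_sdiff husub (Finset.Subset.refl _)
            have hcle : ((u:Finset ℕ) \ A).card ≤ 1 := by
              have := Finset.card_le_card hsd
              omega
            rcases Nat.eq_zero_or_pos ((u:Finset ℕ) \ A).card with h0 | h0
            · exact Or.inl (Finset.sdiff_eq_empty_iff_subset.1 (Finset.card_eq_zero.1 h0))
            · refine Or.inr ⟨by omega, ?_⟩
              apply Finset.subset_empty.1
              rw [← hsC]
              exact Finset.inter_subset_inter husub (Finset.Subset.refl _)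
        · exact Or.inl (hX u h1)
      have hfaces2 : ∀ u ∈ D.support, (u:Finset ℕ) ⊆ B ∨
          (((u:Finset ℕ) \ B).card = 1 ∧ (u:Finset ℕ) ∩ (A ∩ B) = ∅) := by
        intro u hu
        rw [hD2] at hu
        have := Finsupp.support_sub (f := Y) (g := bdry MY) hu
        rcases Finset.mem_union.1 this with h1 | h1
        · exact Or.inl (hY u h1)
        · obtain ⟨s, hsMY, husub⟩ := TS.bdry_support_subset MY u h1
          have hsmem : s ∈ M.support ∧ ¬ P s := by
            have := Finsupp.support_filter (p := fun s => ¬ P s) (f := M) ▸ hsMY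
            exact ⟨(Finset.mem_filter.1 this).1, (Finset.mem_filter.1 this).2⟩
          rcases hclass s hsmem.1 hsmem.2 with hsB | ⟨hs1, hsC⟩
          · exact Or.inl (husub.trans hsB)
          · have hsd : ((u:Finset ℕ) \ B) ⊆ ((s:Finset ℕ) \ B) :=
              Finset.sdiff_subset_sdiff husub (Finset.Subset.refl _)
            have hcle : ((u:Finset ℕ) \ B).card ≤ 1 := by
              have := Finset.card_le_card hsd
              omega
            rcases Nat.eq_zero_or_pos ((u:Finset ℕ) \ B).card with h0 | h0
            · exact Or.inl (Finset.sdiff_eq_empty_iff_subset.1 (Finset.card_eq_zero.1 h0))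
            · refine Or.inr ⟨by omega, ?_⟩
              apply Finset.subset_empty.1
              rw [← hsC]
              exact Finset.inter_subset_inter husub (Finset.Subset.refl _)
      have hsuppD : ∀ u ∈ D.support, (u:Finset ℕ) ⊆ A ∩ B := by
        intro u hu
        have hucard : (u:Finset ℕ).card = n + 2 := u.2
        rcases hfaces1 u hu with huA | ⟨ha1, haC⟩
        · rcases hfaces2 u hu with huB | ⟨hb1, hbC⟩
          · exact Finset.subset_inter huA huB
          · exfalso
            have hUB : ∀ x ∈ (u:Finset ℕ), x ∉ B := by
              intro x hx hxB
              have hxu : x ∈ (u:Finset ℕ) ∩ (A ∩ B) :=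
                Finset.mem_inter.2 ⟨hx, Finset.mem_inter.2 ⟨huA hx, hxB⟩⟩
              rw [hbC] at hxu
              exact absurd hxu (Finset.notMem_empty x)
            have hsd : (u:Finset ℕ) \ B = (u:Finset ℕ) := by
              ext x
              simp only [Finset.mem_sdiff]
              exact ⟨fun hh => hh.1, fun hh => ⟨hh, hUB x hh⟩⟩
            rw [hsd] at hb1
            omega
        · rcases hfaces2 u hu with huB | ⟨hb1, hbC⟩
          · exfalso
            have hUA : ∀ x ∈ (u:Finset ℕ), x ∉ A := by
              intro x hx hxA
              have hxu : x ∈ (u:Finset ℕ) ∩ (A ∩ B) :=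
                Finset.mem_inter.2 ⟨hx, Finset.mem_inter.2 ⟨hxA, huB hx⟩⟩
              rw [haC] at hxu
              exact absurd hxu (Finset.notMem_empty x)
            have hsd : (u:Finset ℕ) \ A = (u:Finset ℕ) := by
              ext x
              simp only [Finset.mem_sdiff]
              exact ⟨fun hh => hh.1, fun hh => ⟨hh, hUA x hh⟩⟩
            rw [hsd] at ha1
            omega
          · exfalso
            have hsubint : (u:Finset ℕ) ∩ A ⊆ (u:Finset ℕ) \ B := by
              intro x hx
              have hxu : x ∈ (u:Finset ℕ) := Finset.mem_of_mem_inter_left hx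
              have hxA : x ∈ A := Finset.mem_of_mem_inter_right hx
              refine Finset.mem_sdiff.2 ⟨hxu, fun hxB => ?_⟩
              have hxc : x ∈ (u:Finset ℕ) ∩ (A ∩ B) :=
                Finset.mem_inter.2 ⟨hxu, Finset.mem_inter.2 ⟨hxA, hxB⟩⟩
              rw [haC] at hxc
              exact absurd hxc (Finset.notMem_empty x)
            have h1 := Finset.card_le_card hsubint
            have h2 := Finset.card_inter_add_card_sdiff (u:Finset ℕ) A
            omega
      have hDzero : D = 0 := by
        apply TS.small_cycle_zero D ?_ (A ∩ B) h hsuppD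
        rw [hD, TS.bdry_sub, TS.bdry_bdry, hXc, sub_zero]
      have hbMX : bdry MX = X := by
        have h1 : bdry MX - X = 0 := by rw [← hD, hDzero]
        exact sub_eq_zero.1 h1
      have hbMY : bdry MY = Y := by
        have h1 : Y - bdry MY = 0 := by rw [← hD2, hDzero]
        exact (sub_eq_zero.1 h1).symm
      have hnorm : znorm M = znorm MX + znorm MY :=
        (TS.znorm_filter_add_not M P).symm
      obtain ⟨ht1, ht2⟩ := TS.taut_pair M MX MY X Y hbMX hbMY hM hbd hnorm
      exact ⟨MX, MY, hMsum.symm, hbMX, hbMY, hnorm, ht1, ht2⟩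
end
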